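/- arXiv:1509.08235 — 4 statements merged into one kernel-verified Lean document; each statement's English description precedes it below -/
import Mathlib

section
/- Let c be a real number and let f be a measurable function from (0,∞) to ℂ such that u ↦ f(u)u^{c-1} is Lebesgue integrable on (0,∞), and suppose that the function t ↦ M[f](c+it) := ∫₀^∞ u^{c+it-1} f(u) du is Lebesgue integrable over ℝ. Then for almost every x ∈ (0,∞) one has f(x) = (x^{-c}/(2π)) ∫_{-∞}^{∞} M[f](c+it) x^{-it} dt. -/
open MeasureTheory Filter Complex Set

noncomputable section

/-- Membership in the space `X²_c`: `u ↦ f(u) u^(c-1/2)` belongs to `L²(0,∞)`. -/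
def MemXc2 (c : ℝ) (f : ℝ → ℂ) : Prop :=
  MemLp (fun u : ℝ => f u * ((u ^ (c - 1/2) : ℝ) : ℂ)) 2 (volume.restrict (Set.Ioi 0))

/-- The `X²_c` norm: `(∫₀^∞ |f(u)|² u^(2c-1) du)^(1/2)`. -/
def Xnorm (c : ℝ) (f : ℝ → ℂ) : ℝ :=
  Real.sqrt (∫ u in Set.Ioi (0:ℝ), ‖f u‖ ^ 2 * u ^ (2 * c - 1))

/-- The ordinary Mellin transform of `f` at the point `c + i t`. -/
def MellinT (c : ℝ) (f : ℝ → ℂ) (t : ℝ) : ℂ :=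
  ∫ u in Set.Ioi (0:ℝ), (u : ℂ) ^ ((c : ℂ) + t * Complex.I - 1) * f u

/-- `G` is the `L²`-Mellin transform of `f` on the line `c + iℝ`: the truncated Mellin
integrals over `(1/ρ, ρ]` converge to `G` in the `L²(ℝ, dt)` norm as `ρ → ∞`. -/
def MellinTransL2 (c : ℝ) (f G : ℝ → ℂ) : Prop :=
  Tendsto (fun ρ : ℝ =>
      eLpNorm (fun t : ℝ =>
        (∫ u in Set.Ioc ρ⁻¹ ρ, (u : ℂ) ^ ((c : ℂ) + t * Complex.I - 1) * f u) - G t)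
        2 volume)
    atTop (nhds 0)

/-- The Mellin derivative `Θ_c f (x) = x f'(x) + c f(x)`. -/
def mellinD (c : ℝ) (f : ℝ → ℂ) : ℝ → ℂ :=
  fun x => (x : ℂ) * deriv f x + (c : ℂ) * f x

/-- Membership in the Mellin–Bernstein (bandlimited) space `B²_{c,T}`: `f` is continuous
on `(0,∞)`, belongs to `X²_c`, and its `L²`-Mellin transform vanishes a.e. outside `[-T,T]`. -/
def MemB2 (c T : ℝ) (f : ℝ → ℂ) : Prop :=
  ContinuousOn f (Set.Ioi 0) ∧ MemXc2 c f ∧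
    ∃ G : ℝ → ℂ, Measurable G ∧ MellinTransL2 c f G ∧ ∀ᵐ t : ℝ, T < |t| → G t = 0

/-- The `lin_c` function: `lin_c(x) = x^(-c) sin(π log x)/(π log x)`, `lin_c(1) = 1`. -/
def linc (c : ℝ) (x : ℝ) : ℝ :=
  if x = 1 then 1 else x ^ (-c) * Real.sin (Real.pi * Real.log x) / (Real.pi * Real.log x)

open Real
open scoped FourierTransform Real

section MellinAuxSection

namespace MellinAEAux

lemma hasCompactSupport_iteratedDeriv {Φ : ℝ → ℂ} (h : HasCompactSupport Φ) :
    ∀ n : ℕ, HasCompactSupport (iteratedDeriv n Φ)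
  | 0 => by simpa [iteratedDeriv_zero] using h
  | (n+1) => by
      rw [iteratedDeriv_succ]; exact (hasCompactSupport_iteratedDeriv h n).deriv

lemma continuous_fourierIntegral' {f : ℝ → ℂ} (hf : Integrable f) :
    Continuous (𝓕 f) :=
  VectorFourier.fourierIntegral_continuous Real.continuous_fourierChar
    (by exact continuous_inner) hf

lemma norm_fourierIntegral_le {f : ℝ → ℂ} (ξ : ℝ) :
    ‖𝓕 f ξ‖ ≤ ∫ x, ‖f x‖ :=
  VectorFourier.norm_fourierIntegral_le_integral_norm _ _ _ _ _

lemma integrable_fourierIntegral_of_contDiff {Φ : ℝ → ℂ}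
    (hΦ : ContDiff ℝ (⊤ : ℕ∞) Φ) (hsupp : HasCompactSupport Φ) : Integrable (𝓕 Φ) := by
  have hint : ∀ n : ℕ, Integrable (iteratedDeriv n Φ) := fun n =>
    (hΦ.continuous_iteratedDeriv n (by exact_mod_cast le_top)).integrable_of_hasCompactSupport
      (hasCompactSupport_iteratedDeriv hsupp n)
  have hkey : 𝓕 (iteratedDeriv 2 Φ) = fun (ξ : ℝ) => (2 * π * I * ξ) ^ 2 • (𝓕 Φ ξ) :=
    Real.fourier_iteratedDeriv (N := (2 : ℕ∞)) (hΦ.of_le (by exact_mod_cast le_top))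
      (fun n _ => hint n) le_rfl
  set A : ℝ := ∫ x, ‖Φ x‖ with hA
  set B : ℝ := (∫ x, ‖iteratedDeriv 2 Φ x‖) / (4 * π ^ 2) with hB
  have hπ : (0:ℝ) < 4 * π ^ 2 := by positivity
  have hbound : ∀ ξ : ℝ, ‖𝓕 Φ ξ‖ ≤ (A + B) * (1 + ξ ^ 2)⁻¹ := by
    intro ξ
    have h1 : ‖𝓕 Φ ξ‖ ≤ A := norm_fourierIntegral_le ξ
    have h2 : ξ ^ 2 * ‖𝓕 Φ ξ‖ ≤ B := by
      have h3 : ‖𝓕 (iteratedDeriv 2 Φ) ξ‖ = 4 * π ^ 2 * (ξ ^ 2 * ‖𝓕 Φ ξ‖) := by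
        rw [hkey]
        simp only [norm_smul, norm_pow, norm_mul, Complex.norm_real, Real.norm_eq_abs,
          Complex.norm_I, Complex.norm_two]
        rw [_root_.abs_of_nonneg Real.pi_nonneg, ← _root_.sq_abs ξ]
        ring
      have h4 : ‖𝓕 (iteratedDeriv 2 Φ) ξ‖ ≤ ∫ x, ‖iteratedDeriv 2 Φ x‖ :=
        norm_fourierIntegral_le ξ
      rw [h3] at h4
      rw [hB, le_div_iff₀ hπ]
      linarith [h4]
    rw [← div_eq_mul_inv, le_div_iff₀ (by positivity : (0:ℝ) < 1 + ξ ^ 2)]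
    nlinarith [h1, h2]
  refine ((integrable_inv_one_add_sq).const_mul (A + B)).mono'
    ((continuous_fourierIntegral' (hΦ.continuous.integrable_of_hasCompactSupport
      hsupp)).aestronglyMeasurable) (ae_of_all _ fun ξ => ?_)
  simpa using hbound ξ

lemma mult_formula {f g : ℝ → ℂ} (hf : Integrable f) (hg : Integrable g) :
    ∫ ξ, 𝓕 f ξ * g ξ = ∫ x, f x * 𝓕 g x := by
  have hflip : (innerₗ ℝ).flip = innerₗ ℝ := by
    apply LinearMap.ext; intro x; apply LinearMap.ext; intro y
    exact real_inner_comm x y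
  have := VectorFourier.integral_fourierIntegral_smul_eq_flip (L := innerₗ ℝ)
    Real.continuous_fourierChar (by exact continuous_inner) hf hg
  rw [hflip] at this
  simp only [smul_eq_mul] at this
  exact this


set_option maxHeartbeats 2000000 in
lemma ae_fourier_inversion {f : ℝ → ℂ} (hf : Integrable f) (hFf : Integrable (𝓕 f)) :
    ∀ᵐ x : ℝ, f x = 𝓕⁻ (𝓕 f) x := by
  have hcont : Continuous (𝓕⁻ (𝓕 f)) := by
    have heq : 𝓕⁻ (𝓕 f) = fun x => 𝓕 (𝓕 f) (-x) :=
      funext fun x => Real.fourierInv_eq_fourier_neg _ _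
    rw [heq]
    exact (continuous_fourierIntegral' hFf).comp continuous_neg
  apply ae_eq_of_integral_contDiff_smul_eq hf.locallyIntegrable hcont.locallyIntegrable
  intro φ hφ hφsupp
  set Φ : ℝ → ℂ := fun x => (φ x : ℂ) with hΦdef
  have hΦsm : ContDiff ℝ (⊤ : ℕ∞) Φ := Complex.ofRealCLM.contDiff.comp hφ
  have hΦsupp : HasCompactSupport Φ := by
    simpa [Function.comp_def] using hφsupp.comp_left (g := Complex.ofReal) (by simp)
  have hΦint : Integrable Φ := hΦsm.continuous.integrable_of_hasCompactSupport hΦsupp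
  have hFΦint : Integrable (𝓕 Φ) := integrable_fourierIntegral_of_contDiff hΦsm hΦsupp
  set Ψ : ℝ → ℂ := fun x => Φ (-x) with hΨdef
  have hΨsm : ContDiff ℝ (⊤ : ℕ∞) Ψ := hΦsm.comp contDiff_neg
  have hΨsupp : HasCompactSupport Ψ := by
    have := hΦsupp.comp_homeomorph (Homeomorph.neg ℝ)
    simpa [Function.comp_def] using this
  have hΨint : Integrable Ψ := hΨsm.continuous.integrable_of_hasCompactSupport hΨsupp
  have hFinvΦ : 𝓕⁻ Φ = 𝓕 Ψ := Real.fourierInv_eq_fourier_comp_neg Φ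
  have hFinvΦint : Integrable (𝓕⁻ Φ) := by
    rw [hFinvΦ]; exact integrable_fourierIntegral_of_contDiff hΨsm hΨsupp
  have key1 : ∫ x, Φ x * f x = ∫ ξ, 𝓕 f ξ * 𝓕⁻ Φ ξ := by
    have h2 : 𝓕 (𝓕⁻ Φ) = Φ := hΦsm.continuous.fourier_fourierInv_eq hΦint hFΦint
    have := mult_formula hf hFinvΦint
    rw [h2] at this
    calc ∫ x, Φ x * f x = ∫ x, f x * Φ x :=
          integral_congr_ae (ae_of_all _ fun x => mul_comm _ _)
      _ = ∫ ξ, 𝓕 f ξ * 𝓕⁻ Φ ξ := this.symm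
  have key2 : ∫ x, Φ x * 𝓕⁻ (𝓕 f) x = ∫ ξ, 𝓕 f ξ * 𝓕⁻ Φ ξ := by
    have e1 : ∫ x, Φ x * 𝓕⁻ (𝓕 f) x = ∫ x, Ψ x * 𝓕 (𝓕 f) x := by
      rw [← integral_neg_eq_self (fun x => Ψ x * 𝓕 (𝓕 f) x) volume]
      congr 1; ext x
      rw [hΨdef]
      simp only [neg_neg]
      rw [Real.fourierInv_eq_fourier_neg]
    rw [e1]
    have := mult_formula hFf hΨint
    rw [← hFinvΦ] at this
    calc ∫ x, Ψ x * 𝓕 (𝓕 f) x = ∫ x, 𝓕 (𝓕 f) x * Ψ x :=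
          integral_congr_ae (ae_of_all _ fun x => mul_comm _ _)
      _ = ∫ x, 𝓕 f x * 𝓕⁻ Φ x := this
  calc ∫ x, φ x • f x = ∫ x, Φ x * f x := by
        simp only [Complex.real_smul, hΦdef]
    _ = ∫ ξ, 𝓕 f ξ * 𝓕⁻ Φ ξ := key1
    _ = ∫ x, Φ x * 𝓕⁻ (𝓕 f) x := key2.symm
    _ = ∫ x, φ x • 𝓕⁻ (𝓕 f) x := by
        simp only [Complex.real_smul, hΦdef]

lemma ae_comp_neg_log {P : ℝ → Prop} (h : ∀ᵐ y : ℝ, P y) :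
    ∀ᵐ x ∂(volume.restrict (Set.Ioi (0:ℝ))), P (-Real.log x) := by
  rw [ae_iff] at h ⊢
  rw [Measure.restrict_apply' measurableSet_Ioi]
  have himg : volume ((fun y => Real.exp (-y)) '' {y | ¬ P y}) = 0 :=
    addHaar_image_eq_zero_of_differentiableOn_of_addHaar_eq_zero volume
      ((Real.differentiable_exp.comp differentiable_neg).differentiableOn) h
  refine measure_mono_null ?_ himg
  rintro x ⟨hx, hx0⟩
  exact ⟨-Real.log x, hx, by simp [Real.exp_log (mem_Ioi.mp hx0)]⟩


theorem rexp_neg_deriv_aux' :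
    ∀ x ∈ Set.univ, HasDerivWithinAt (rexp ∘ Neg.neg) (-rexp (-x)) Set.univ x :=
  fun x _ => mul_neg_one (rexp (-x)) ▸
    ((Real.hasDerivAt_exp (-x)).comp x (hasDerivAt_neg x)).hasDerivWithinAt

theorem rexp_neg_image_aux' : rexp ∘ Neg.neg '' Set.univ = Set.Ioi 0 := by
  rw [Set.image_comp, Set.image_univ_of_surjective neg_surjective, Set.image_univ, Real.range_exp]

theorem rexp_neg_injOn_aux' : Set.univ.InjOn (rexp ∘ Neg.neg) :=
  Real.exp_injective.injOn.comp neg_injective.injOn (Set.univ.mapsTo_univ _)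

theorem cexp_pow_aux (x : ℝ) (s : ℂ) :
    cexp (-(x : ℂ)) * cexp (-(x : ℂ)) ^ (s - 1) = cexp (-s * x) := by
  nth_rewrite 1 [← cpow_one (cexp (-(x:ℂ)))]
  rw [← cpow_add _ _ (Complex.exp_ne_zero _)]
  have h1 : (1 : ℂ) + (s - 1) = s := by ring
  rw [h1, cpow_def_of_ne_zero (Complex.exp_ne_zero _),
    Complex.log_exp (by simpa using Real.pi_pos) (by simpa using Real.pi_nonneg)]
  congr 1
  ring

end MellinAEAux


open MellinAEAux

end MellinAuxSection

open MellinAEAux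

/-- **Mellin inversion theorem in `X_c`.** If `f ∈ X_c` and `t ↦ M[f](c+it)` is
integrable over `ℝ`, then for a.e. `x > 0`,
`f(x) = (x^(-c)/(2π)) ∫_ℝ M[f](c+it) x^(-it) dt`. -/
theorem mellin_inversion_Xc (c : ℝ) (f : ℝ → ℂ) (hmeas : Measurable f)
    (hf1 : IntegrableOn (fun u : ℝ => f u * ((u ^ (c - 1) : ℝ) : ℂ)) (Set.Ioi 0))
    (hM : Integrable (fun t : ℝ => MellinT c f t)) :
    ∀ᵐ x ∂(volume.restrict (Set.Ioi (0:ℝ))),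
      f x = ((x ^ (-c) : ℝ) : ℂ) / (2 * Real.pi) *
        ∫ t : ℝ, MellinT c f t * (x : ℂ) ^ (-(t : ℂ) * Complex.I) := by
  unfold MellinT at hM ⊢
  have h2π : (2 * π : ℝ) ≠ 0 := by
    simp [Real.pi_ne_zero]
  have hMT : ∀ t : ℝ, (∫ u in Set.Ioi (0:ℝ), (u : ℂ) ^ ((c : ℂ) + t * Complex.I - 1) * f u)
      = mellin f ((c : ℂ) + t * Complex.I) := by
    intro t
    rw [mellin]
    refine setIntegral_congr_fun measurableSet_Ioi fun u hu => ?_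
    rw [smul_eq_mul, mul_comm]
  -- MellinConvergent
  have hconv : MellinConvergent f ((c : ℂ)) := by
    refine hf1.congr_fun (fun u hu => ?_) measurableSet_Ioi
    rw [smul_eq_mul, mul_comm]
    beta_reduce
    congr 1
    rw [Complex.ofReal_cpow (le_of_lt hu)]
    push_cast
    ring_nf
  set g : ℝ → ℂ := fun u => rexp (-c * u) • f (rexp (-u)) with hgdef
  have hg_int : Integrable g := by
    rw [MellinConvergent, ← rexp_neg_image_aux', integrableOn_image_iff_integrableOn_abs_deriv_smul
      MeasurableSet.univ rexp_neg_deriv_aux' rexp_neg_injOn_aux'] at hconv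
    replace hconv : Integrable fun (x : ℝ) => cexp (-(c:ℂ) * x) • f (rexp (-x)) := by
      have h' : Integrable (fun x : ℝ =>
          cexp (-(x:ℂ)) * (cexp (-(x:ℂ)) ^ ((c:ℂ) - 1) * f (rexp (-x)))) := by
        simpa using hconv
      refine h'.congr (ae_of_all _ fun x => ?_)
      simp only [smul_eq_mul]
      rw [← mul_assoc, cexp_pow_aux]
    have : (fun u : ℝ => rexp (-c * u) • f (rexp (-u)))
        = fun x : ℝ => cexp (-(c:ℂ) * x) • f (rexp (-x)) := by
      funext u
      rw [Complex.real_smul, smul_eq_mul]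
      congr 1
      push_cast
      ring_nf
    rw [hgdef, this]
    exact hconv
  have hVert : Complex.VerticalIntegrable (mellin f) c := by
    have : (fun t : ℝ => ∫ u in Set.Ioi (0:ℝ), (u : ℂ) ^ ((c : ℂ) + t * Complex.I - 1) * f u)
        = fun t : ℝ => mellin f ((c:ℂ) + t * Complex.I) := funext hMT
    rw [Complex.VerticalIntegrable]
    rw [this] at hM
    exact hM
  have hFg : Integrable (𝓕 g) := by
    have : Integrable (𝓕 (fun u => rexp (-(c * u)) • f (rexp (-u)))) := by
      simpa [mellin_eq_fourier, mul_div_cancel_right₀ _ h2π] using hVert.comp_mul_right' h2π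
    simp_rw [neg_mul_eq_neg_mul] at this
    exact this
  have hae := ae_fourier_inversion hg_int hFg
  have htrans := ae_comp_neg_log (P := fun y => g y = 𝓕⁻ (𝓕 g) y) hae
  have hFeq : (fun y : ℝ => mellin f ((c:ℂ) + 2 * π * y * Complex.I)) = 𝓕 g := by
    funext y
    rw [mellin_eq_fourier]
    have hre : ((c:ℂ) + 2 * π * y * Complex.I).re = c := by simp
    have him : ((c:ℂ) + 2 * π * y * Complex.I).im = 2 * π * y := by simp
    rw [hre, him]
    congr 1
    field_simp
    rw [hgdef]
    simp only [neg_mul]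
  filter_upwards [htrans, ae_restrict_mem measurableSet_Ioi] with x hx hx0
  have hxpos : (0:ℝ) < x := hx0
  have hxne : (x:ℂ) ≠ 0 := Complex.ofReal_ne_zero.mpr (ne_of_gt hxpos)
  have hinv := mellinInv_eq_fourierInv c (mellin f) hxpos
  rw [hFeq, ← hx] at hinv
  -- hinv : mellinInv c (mellin f) x = (x:ℂ)^(-c:ℂ) • g (-Real.log x)
  have hgx : g (-Real.log x) = ((x ^ c : ℝ) : ℂ) * f x := by
    rw [hgdef]
    simp only [neg_neg, Real.exp_log hxpos]
    rw [Complex.real_smul]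
    congr 2
    rw [Real.rpow_def_of_pos hxpos]
    ring_nf
  have hxc : ((x ^ (-c) : ℝ) : ℂ) = (x:ℂ) ^ (-(c:ℂ)) := by
    rw [Complex.ofReal_cpow hxpos.le]
    push_cast
    ring_nf
  have hfinal : mellinInv c (mellin f) x = f x := by
    rw [hinv, hgx, smul_eq_mul, ← hxc, ← mul_assoc, ← Complex.ofReal_mul,
      ← Real.rpow_add hxpos]
    norm_num
  simp_rw [hMT]
  rw [← hfinal, mellinInv]
  have hsplit : ∀ t : ℝ, (x:ℂ) ^ (-((c:ℂ) + t * Complex.I)) • mellin f ((c:ℂ) + t * Complex.I)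
      = (x:ℂ) ^ (-(c:ℂ)) * (mellin f ((c:ℂ) + t * Complex.I) * (x:ℂ) ^ (-(t:ℂ) * Complex.I)) := by
    intro t
    rw [smul_eq_mul, show -((c:ℂ) + t * Complex.I) = -(c:ℂ) + -(t:ℂ) * Complex.I by ring,
      Complex.cpow_add _ _ hxne]
    ring
  simp_rw [hsplit]
  rw [integral_const_mul, Complex.real_smul, ← hxc]
  push_cast
  ring
end
end

section
/- Let c be a real number and let f : (0,∞) → ℂ be measurable with u ↦ f(u)u^{c-1} Lebesgue integrable on (0,∞). If the function t ↦ M[f](c+it) := ∫₀^∞ u^{c+it-1} f(u) du is Lebesgue integrable over ℝ, then u ↦ f(u)u^{c-1/2} belongs to L²(0,∞). -/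
open MeasureTheory Filter Complex Set

noncomputable section

section AuxMellin

open Real
open scoped FourierTransform Convolution


lemma fourierIntegral_convolution {φ : ℝ → ℝ} {g : ℝ → ℂ} (hφ : Integrable φ)
    (hg : Integrable g) (ξ : ℝ) :
    𝓕 (φ ⋆[ContinuousLinearMap.lsmul ℝ ℝ] g) ξ
      = 𝓕 (fun x => (φ x : ℂ)) ξ * 𝓕 g ξ := by
  set e : ℝ → ℂ := fun x => Complex.exp (↑(-2 * π * x * ξ) * Complex.I) with he
  have hnorm : ∀ x, ‖e x‖ = 1 := fun x => by
    simpa [he] using Complex.norm_exp_ofReal_mul_I (-2 * π * x * ξ)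
  have hemul : ∀ x t : ℝ, e (x + t) = e t * e x := by
    intro x t
    simp only [he, ← Complex.exp_add]
    congr 1
    push_cast
    ring
  have hF : ∀ h : ℝ → ℂ, 𝓕 h ξ = ∫ x, e x • h x := by
    intro h
    rw [Real.fourier_eq']
    refine integral_congr_ae (Eventually.of_forall fun x => ?_)
    simp only [he, RCLike.inner_apply, conj_trivial, ← mul_assoc]
    rw [mul_right_comm (-2 * π) ξ x]
  have h1 := hφ.convolution_integrand (ContinuousLinearMap.lsmul ℝ ℝ) hg
  have key : Integrable (fun p : ℝ × ℝ => e p.1 • (φ p.2 • g (p.1 - p.2)))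
      (volume.prod volume) := by
    have hm : AEStronglyMeasurable (fun p : ℝ × ℝ => e p.1 • (φ p.2 • g (p.1 - p.2)))
        (volume.prod volume) := by
      apply AEStronglyMeasurable.smul (f := fun p : ℝ × ℝ => e p.1) (g := fun p : ℝ × ℝ => φ p.2 • g (p.1 - p.2))
      · exact (Continuous.aestronglyMeasurable (by fun_prop))
      · simpa using h1.aestronglyMeasurable
    refine h1.norm.mono' hm ?_
    filter_upwards with p
    simp [norm_smul, hnorm]
  calc
    𝓕 (φ ⋆[ContinuousLinearMap.lsmul ℝ ℝ] g) ξ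
        = ∫ x, e x • ∫ t, φ t • g (x - t) := by
          rw [hF]
          rfl
    _ = ∫ x, ∫ t, e x • (φ t • g (x - t)) := by
          simp_rw [integral_smul]
    _ = ∫ t, ∫ x, e x • (φ t • g (x - t)) := integral_integral_swap key
    _ = ∫ t, (e t • (φ t : ℂ)) * ∫ x, e x • g x := by
          refine integral_congr_ae (Eventually.of_forall fun t => ?_)
          have A : ∫ x, e x • g (x - t) = e t • ∫ x, e x • g x := by
            rw [← integral_add_right_eq_self (fun x => e x • g (x - t)) t]
            simp only [add_sub_cancel_right, hemul, mul_smul]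
            rw [integral_smul]
          have B : ∀ x : ℝ, e x • (φ t • g (x - t)) = φ t • (e x • g (x - t)) := fun x =>
            smul_comm _ _ _
          simp_rw [B]
          rw [integral_smul, A]
          simp only [Complex.real_smul, smul_eq_mul]
          ring
    _ = (∫ t, e t • (φ t : ℂ)) * ∫ x, e x • g x := by rw [integral_mul_const]
    _ = 𝓕 (fun x => (φ x : ℂ)) ξ * 𝓕 g ξ := by rw [hF, hF]

lemma ae_norm_le_of_integrable_fourierIntegral {g : ℝ → ℂ} (hg : Integrable g)
    (hFg : Integrable (𝓕 g)) :
    ∀ᵐ x : ℝ, ‖g x‖ ≤ ∫ ξ, ‖𝓕 g ξ‖ := by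
  set C := ∫ ξ, ‖𝓕 g ξ‖ with hC
  let φ : ℕ → ContDiffBump (0 : ℝ) := fun n =>
    ⟨((n : ℝ) + 1)⁻¹, 2 * ((n : ℝ) + 1)⁻¹, by positivity, by
      have : (0:ℝ) < ((n : ℝ) + 1)⁻¹ := by positivity
      linarith⟩
  have hφout : Tendsto (fun n => (φ n).rOut) atTop (nhds 0) := by
    have h1 : Tendsto (fun n : ℕ => ((n : ℝ) + 1)⁻¹) atTop (nhds 0) := by
      simpa [one_div] using tendsto_one_div_add_atTop_nhds_zero_nat (𝕜 := ℝ)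
    simpa using h1.const_mul 2
  have h'φ : ∀ᶠ n : ℕ in atTop, (φ n).rOut ≤ 2 * (φ n).rIn :=
    Eventually.of_forall fun n => le_refl _
  have hae := ContDiffBump.ae_convolution_tendsto_right_of_locallyIntegrable
    (μ := volume) hφout h'φ hg.locallyIntegrable
  have hbound : ∀ (n : ℕ) (x : ℝ),
      ‖((φ n).normed volume ⋆[ContinuousLinearMap.lsmul ℝ ℝ] g) x‖ ≤ C := by
    intro n x
    set ψ := (φ n).normed volume with hψ
    have hψi : Integrable ψ := (φ n).integrable_normed
    have hconv_int : Integrable (ψ ⋆[ContinuousLinearMap.lsmul ℝ ℝ] g) :=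
      hψi.integrable_convolution _ hg
    have hcs : HasCompactSupport ψ := (φ n).hasCompactSupport_normed
    have hconv_cont : Continuous (ψ ⋆[ContinuousLinearMap.lsmul ℝ ℝ] g) :=
      hcs.continuous_convolution_left (ContinuousLinearMap.lsmul ℝ ℝ)
        ((φ n).continuous_normed) hg.locallyIntegrable
    have hFψ : ∀ ξ : ℝ, ‖𝓕 (fun y => (ψ y : ℂ)) ξ‖ ≤ 1 := by
      intro ξ
      have h1 : ‖𝓕 (fun y => (ψ y : ℂ)) ξ‖ ≤ ∫ y, ‖(ψ y : ℂ)‖ :=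
        VectorFourier.norm_fourierIntegral_le_integral_norm _ _ _ _ _
      have h2 : (∫ y, ‖(ψ y : ℂ)‖) = 1 := by
        rw [← (φ n).integral_normed (μ := volume)]
        refine integral_congr_ae (Eventually.of_forall fun y => ?_)
        simp only [hψ, Complex.norm_real, Real.norm_eq_abs]
        exact _root_.abs_of_nonneg ((φ n).nonneg_normed y)
      rw [h2] at h1
      exact h1
    have hFconv_le : ∀ ξ : ℝ, ‖𝓕 (ψ ⋆[ContinuousLinearMap.lsmul ℝ ℝ] g) ξ‖ ≤ ‖𝓕 g ξ‖ := by
      intro ξ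
      rw [fourierIntegral_convolution hψi hg ξ, norm_mul]
      calc ‖𝓕 (fun y => (ψ y : ℂ)) ξ‖ * ‖𝓕 g ξ‖ ≤ 1 * ‖𝓕 g ξ‖ :=
            mul_le_mul_of_nonneg_right (hFψ ξ) (norm_nonneg _)
        _ = ‖𝓕 g ξ‖ := one_mul _
    have hFconv_int : Integrable (𝓕 (ψ ⋆[ContinuousLinearMap.lsmul ℝ ℝ] g)) := by
      refine hFg.norm.mono' ?_ (Eventually.of_forall hFconv_le)
      exact (VectorFourier.fourierIntegral_continuous Real.continuous_fourierChar
        continuous_inner hconv_int).aestronglyMeasurable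
    have hinv := hconv_int.fourierInv_fourier_eq hFconv_int (hconv_cont.continuousAt (x := x))
    calc ‖(ψ ⋆[ContinuousLinearMap.lsmul ℝ ℝ] g) x‖
        = ‖𝓕⁻ (𝓕 (ψ ⋆[ContinuousLinearMap.lsmul ℝ ℝ] g)) x‖ := by rw [hinv]
      _ ≤ ∫ ξ, ‖𝓕 (ψ ⋆[ContinuousLinearMap.lsmul ℝ ℝ] g) ξ‖ :=
          VectorFourier.norm_fourierIntegral_le_integral_norm _ _ _ _ _
      _ ≤ C := integral_mono hFconv_int.norm hFg.norm hFconv_le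
  filter_upwards [hae] with x hx
  exact le_of_tendsto hx.norm (Eventually.of_forall fun n => hbound n x)


private lemma rexp_neg_deriv_aux' :
    ∀ x ∈ univ, HasDerivWithinAt (rexp ∘ Neg.neg) (-rexp (-x)) univ x :=
  fun x _ ↦ mul_neg_one (rexp (-x)) ▸
    ((Real.hasDerivAt_exp (-x)).comp x (hasDerivAt_neg x)).hasDerivWithinAt

private lemma rexp_neg_image_aux' : rexp ∘ Neg.neg '' univ = Ioi 0 := by
  rw [Set.image_comp, Set.image_univ_of_surjective neg_surjective, Set.image_univ, Real.range_exp]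

private lemma rexp_neg_injOn_aux' : univ.InjOn (rexp ∘ Neg.neg) :=
  Real.exp_injective.injOn.comp neg_injective.injOn (univ.mapsTo_univ _)

private lemma rexp_cexp_aux' {E : Type*} [NormedAddCommGroup E] [NormedSpace ℂ E]
    (x : ℝ) (s : ℂ) (f : E) :
    rexp (-x) • cexp (-↑x) ^ (s - 1) • f = cexp (-s * ↑x) • f := by
  show (rexp (-x) : ℂ) • _ = _ • f
  rw [← smul_assoc, smul_eq_mul]
  push_cast
  conv in cexp _ * _ => lhs; rw [← cpow_one (cexp _)]
  rw [← cpow_add _ _ (Complex.exp_ne_zero _), cpow_def_of_ne_zero (Complex.exp_ne_zero _),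
    Complex.log_exp (by norm_num; exact pi_pos) (by simpa using pi_nonneg)]
  ring_nf

/-- If `f ∈ X_c` and `t ↦ M[f](c+it)` is integrable over `ℝ`, then `f ∈ X²_c`. -/
theorem mellin_Xc_mem_Xc2 (c : ℝ) (f : ℝ → ℂ) (hmeas : Measurable f)
    (hf1 : IntegrableOn (fun u : ℝ => f u * ((u ^ (c - 1) : ℝ) : ℂ)) (Set.Ioi 0))
    (hM : Integrable (fun t : ℝ => MellinT c f t)) :
    MemXc2 c f := by
  set g : ℝ → ℂ := fun x => Real.exp (-c * x) • f (Real.exp (-x)) with hgdef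
  -- `f` is Mellin convergent at `c`
  have hconv : MellinConvergent f (c : ℂ) := by
    refine hf1.congr_fun (fun t ht => ?_) measurableSet_Ioi
    have h1 : ((c : ℂ) - 1) = ((c - 1 : ℝ) : ℂ) := by push_cast; ring
    beta_reduce
    rw [smul_eq_mul, mul_comm, h1, Complex.ofReal_cpow (le_of_lt ht)]
  -- `g` is integrable
  have hg_int : Integrable g := by
    have hf' := hconv
    rw [MellinConvergent, ← rexp_neg_image_aux', integrableOn_image_iff_integrableOn_abs_deriv_smul
      MeasurableSet.univ rexp_neg_deriv_aux' rexp_neg_injOn_aux', integrableOn_univ] at hf'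
    refine hf'.congr (Eventually.of_forall fun x => ?_)
    show |(-rexp (-x))| • (((rexp (-x) : ℝ) : ℂ) ^ ((c : ℂ) - 1) • f (rexp (-x)))
        = rexp (-c * x) • f (rexp (-x))
    rw [abs_neg, Real.abs_exp]
    have hco : ((rexp (-x) : ℝ) : ℂ) = cexp (-↑x) := by
      rw [Complex.ofReal_exp]
      norm_num
    rw [hco, rexp_cexp_aux' x c (f (rexp (-x)))]
    have : cexp (-↑c * ↑x) = ((rexp (-c * x) : ℝ) : ℂ) := by
      rw [Complex.ofReal_exp]
      norm_num
    rw [this, Complex.coe_smul]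
  -- `𝓕 g` is integrable
  have hM' : Complex.VerticalIntegrable (mellin f) c volume := by
    refine hM.congr (Eventually.of_forall fun t => ?_)
    simp only [MellinT, mellin, smul_eq_mul]
  have hFg : Integrable (𝓕 g) := by
    have h2π : 2 * π ≠ 0 := by norm_num
    have h : Integrable (𝓕 (fun u ↦ rexp (-(c * u)) • f (rexp (-u)))) := by
      simpa [mellin_eq_fourier, mul_div_cancel_right₀ _ h2π] using hM'.comp_mul_right' h2π
    simp_rw [neg_mul_eq_neg_mul] at h
    exact h
  -- a.e. bound for g
  set C := ∫ ξ : ℝ, ‖𝓕 g ξ‖ with hCdef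
  have hbd : ∀ᵐ x : ℝ, ‖g x‖ ≤ C := ae_norm_le_of_integrable_fourierIntegral hg_int hFg
  -- ‖g‖² is integrable
  have hg_sq : Integrable (fun x => ‖g x‖ ^ 2) := by
    refine Integrable.mono' (hg_int.norm.const_mul C) ?_ ?_
    · exact (hg_int.aestronglyMeasurable.norm.mul
        hg_int.aestronglyMeasurable.norm).congr
        (Eventually.of_forall fun x => (pow_two _).symm)
    · filter_upwards [hbd] with x hx
      have h0 : ‖(‖g x‖ ^ 2 : ℝ)‖ = ‖g x‖ ^ 2 := Real.norm_of_nonneg (by positivity)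
      rw [h0, pow_two]
      exact mul_le_mul_of_nonneg_right hx (norm_nonneg _)
  -- change of variables back to (0, ∞)
  have hint : IntegrableOn (fun u : ℝ => ‖f u‖ ^ 2 * u ^ (2 * c - 1)) (Set.Ioi 0) := by
    rw [← rexp_neg_image_aux', integrableOn_image_iff_integrableOn_abs_deriv_smul
      MeasurableSet.univ rexp_neg_deriv_aux' rexp_neg_injOn_aux', integrableOn_univ]
    refine hg_sq.congr (Eventually.of_forall fun x => ?_)
    show ‖g x‖ ^ 2 = |(-rexp (-x))| • (‖f (rexp (-x))‖ ^ 2 * rexp (-x) ^ (2 * c - 1))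
    have h1 : ‖g x‖ = Real.exp (-c * x) * ‖f (Real.exp (-x))‖ := by
      rw [hgdef]
      simp only [norm_smul, Real.norm_eq_abs, Real.abs_exp]
    have e1 : Real.exp (-x) ^ (2 * c - 1) = Real.exp (-x * (2 * c - 1)) := by
      rw [Real.rpow_def_of_pos (Real.exp_pos _), Real.log_exp]
    have e2 : Real.exp (-x) * Real.exp (-x * (2 * c - 1)) = Real.exp (-c * x) ^ 2 := by
      rw [← Real.exp_add, pow_two, ← Real.exp_add]
      congr 1
      ring
    rw [h1, mul_pow]
    rw [smul_eq_mul, abs_neg, Real.abs_exp, e1]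
    rw [← e2]
    ring
  -- conclude
  have hFmeas : AEStronglyMeasurable (fun u : ℝ => f u * ((u ^ (c - 1/2) : ℝ) : ℂ))
      (volume.restrict (Set.Ioi 0)) := by
    refine Measurable.aestronglyMeasurable ?_
    fun_prop
  rw [MemXc2, memLp_two_iff_integrable_sq_norm hFmeas]
  refine hint.congr_fun (fun u hu => ?_) measurableSet_Ioi
  have hu0 : (0:ℝ) < u := hu
  have h3 : ‖((u ^ (c - 1/2) : ℝ) : ℂ)‖ = u ^ (c - 1/2) := by
    rw [Complex.norm_real, Real.norm_eq_abs]
    exact abs_of_nonneg (Real.rpow_nonneg hu0.le _)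
  rw [norm_mul, mul_pow, h3]
  congr 1
  rw [← Real.rpow_natCast (u ^ (c - 1/2)) 2, ← Real.rpow_mul hu0.le]
  norm_num
  ring_nf
  exact Or.inl trivial

end AuxMellin
end
end

section
/- Let c ∈ ℝ, r ∈ ℕ, and let f belong to the Mellin–Sobolev space W^{2,r}_c. Define h : ℝ → ℂ by h(x) = e^{cx} f(e^x). Then h is r-times differentiable almost everywhere, h^{(r)} ∈ L²(ℝ), and ‖h^{(r)}‖_{L²(ℝ)} = ‖Θ_c^r f‖_{X²_c}. -/
open MeasureTheory Filter Complex Set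

noncomputable section

lemma MSNI.hasDerivAt_step (c : ℝ) (g : ℝ → ℂ) (x : ℝ)
    (hg : DifferentiableAt ℝ g (Real.exp x)) :
    HasDerivAt (fun y : ℝ => (Real.exp (c * y) : ℂ) * g (Real.exp y))
      ((Real.exp (c * x) : ℂ) * mellinD c g (Real.exp x)) x := by
  have h1 : HasDerivAt (fun y : ℝ => Real.exp (c * y)) (Real.exp (c * x) * c) x := by
    exact ((Real.hasDerivAt_exp (c * x)).comp x ((hasDerivAt_id x).const_mul c)).congr_deriv (by simp)
  have h1' : HasDerivAt (fun y : ℝ => ((Real.exp (c * y) : ℝ) : ℂ))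
      ((Real.exp (c * x) * c : ℝ) : ℂ) x := h1.ofReal_comp
  have h2 : HasDerivAt (fun y : ℝ => g (Real.exp y))
      (Real.exp x • deriv g (Real.exp x)) x :=
    hg.hasDerivAt.scomp x (Real.hasDerivAt_exp x)
  have := h1'.fun_mul h2
  refine this.congr_deriv ?_
  simp only [mellinD, Complex.real_smul]
  push_cast
  ring

lemma MSNI.itf_diff {n : ℕ} {f : ℝ → ℂ} (hsm : ContDiffOn ℝ (n : ℕ∞) f (Ioi 0)) :
    ∀ i, i < n → ∀ u ∈ Ioi (0:ℝ), DifferentiableAt ℝ (iteratedDeriv i f) u := by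
  intro i hi u hu
  have h1 : DifferentiableWithinAt ℝ (iteratedDerivWithin i f (Ioi 0)) (Ioi 0) u :=
    hsm.differentiableOn_iteratedDerivWithin (by exact_mod_cast hi)
      isOpen_Ioi.uniqueDiffOn u hu
  have h2 : EqOn (iteratedDerivWithin i f (Ioi 0)) (iteratedDeriv i f) (Ioi 0) := fun v hv => by
    rw [iteratedDerivWithin_eq_iteratedFDerivWithin, iteratedDeriv_eq_iteratedFDeriv,
      iteratedFDerivWithin_of_isOpen i isOpen_Ioi hv]
  exact (h1.congr (fun v hv => (h2 hv).symm) (h2 hu).symm).differentiableAt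
    (isOpen_Ioi.mem_nhds hu)

lemma MSNI.mellinD_contDiffOn {c : ℝ} {k : ℕ} {g : ℝ → ℂ}
    (hg : ContDiffOn ℝ ((k + 1 : ℕ) : ℕ∞) g (Ioi 0)) :
    ContDiffOn ℝ ((k : ℕ) : ℕ∞) (mellinD c g) (Ioi 0) := by
  have hd : ContDiffOn ℝ ((k : ℕ) : ℕ∞) (deriv g) (Ioi 0) :=
    hg.deriv_of_isOpen isOpen_Ioi (by exact_mod_cast le_rfl)
  have hid : ContDiffOn ℝ ((k : ℕ) : ℕ∞) (fun x : ℝ => (x : ℂ)) (Ioi 0) :=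
    (Complex.ofRealCLM.contDiff.of_le le_top).contDiffOn
  exact (hid.mul hd).add (contDiffOn_const.mul (hg.of_le (by exact_mod_cast Nat.le_succ k)))

lemma MSNI.gj_contDiffOn {c : ℝ} {n : ℕ} {f : ℝ → ℂ}
    (hsm : ContDiffOn ℝ (n : ℕ∞) f (Ioi 0)) :
    ∀ j k : ℕ, j + k ≤ n → ContDiffOn ℝ ((k : ℕ) : ℕ∞) ((mellinD c)^[j] f) (Ioi 0) := by
  intro j
  induction j with
  | zero => exact fun k hk => hsm.of_le (by have h : k ≤ n := le_of_add_le_right (a := 0) hk; exact_mod_cast h)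
  | succ j ih =>
    intro k hk
    rw [Function.iterate_succ_apply']
    exact MSNI.mellinD_contDiffOn (ih (k + 1) (by omega))

lemma MSNI.gj_rep (c : ℝ) (f : ℝ → ℂ) (n : ℕ) (hsm : ContDiffOn ℝ (n : ℕ∞) f (Ioi 0)) :
    ∀ j, j ≤ n → ∃ b : ℕ → ℂ, (∀ i, j < i → b i = 0) ∧
      ∀ u ∈ Ioi (0:ℝ), (mellinD c)^[j] f u
        = ∑ i ∈ Finset.range (n+1), b i * (u:ℂ)^i * iteratedDeriv i f u := by
  have hdiff := MSNI.itf_diff hsm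
  intro j
  induction j with
  | zero =>
    intro _
    refine ⟨fun i => if i = 0 then 1 else 0, fun i hi => if_neg (by omega), fun u hu => ?_⟩
    rw [Finset.sum_eq_single_of_mem 0 (Finset.mem_range.mpr (by omega))]
    · simp [iteratedDeriv_zero]
    · intro i _ hi; simp [hi]
  | succ j ih =>
    intro hj
    obtain ⟨b, hb0, hbrep⟩ := ih (by omega)
    have hjn : j < n := by omega
    -- derivative of the sum function
    set S : ℝ → ℂ := fun v => ∑ i ∈ Finset.range (n+1), b i * (v:ℂ)^i * iteratedDeriv i f v with hS
    have hSder : ∀ u ∈ Ioi (0:ℝ), HasDerivAt S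
        (∑ i ∈ Finset.range (n+1),
          b i * ((i:ℂ) * (u:ℂ)^(i-1) * iteratedDeriv i f u + (u:ℂ)^i * iteratedDeriv (i+1) f u)) u := by
      intro u hu
      apply HasDerivAt.fun_sum
      intro i hi
      rcases lt_or_ge i n with hin | hin
      · have h1 : HasDerivAt (fun v : ℝ => (v:ℂ)^i) ((i:ℂ) * (u:ℂ)^(i-1)) u :=
          (hasDerivAt_pow i ((u : ℝ) : ℂ)).comp_ofReal
        have h2 : HasDerivAt (iteratedDeriv i f) (iteratedDeriv (i+1) f u) u := by
          rw [iteratedDeriv_succ]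
          exact (hdiff i hin u hu).hasDerivAt
        have h3 := (h1.const_mul (b i)).fun_mul h2
        refine h3.congr_deriv ?_
        ring
      · have hbi : b i = 0 := hb0 i (by omega)
        rw [hbi]
        simp only [zero_mul]
        exact hasDerivAt_const u 0
    refine ⟨fun i => ((i:ℂ) + c) * b i + (if i = 0 then 0 else b (i-1)), ?_, ?_⟩
    · intro i hi
      have h1 : b i = 0 := hb0 i (by omega)
      have h2 : b (i-1) = 0 := hb0 _ (by omega)
      have h3 : i ≠ 0 := by omega
      simp [h1, h2, h3]
    · intro u hu
      have heq : (mellinD c)^[j+1] f u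
          = (u:ℂ) * deriv ((mellinD c)^[j] f) u + (c:ℂ) * ((mellinD c)^[j] f) u := by
        rw [Function.iterate_succ_apply']; rfl
      have hev : (mellinD c)^[j] f =ᶠ[nhds u] S :=
        Filter.eventuallyEq_of_mem (isOpen_Ioi.mem_nhds hu) hbrep
      have hder : deriv ((mellinD c)^[j] f) u
          = ∑ i ∈ Finset.range (n+1),
            b i * ((i:ℂ) * (u:ℂ)^(i-1) * iteratedDeriv i f u + (u:ℂ)^i * iteratedDeriv (i+1) f u) := by
        rw [hev.deriv_eq, (hSder u hu).deriv]
      rw [heq, hder, hbrep u hu]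
      -- algebra
      have key1 : ∀ i : ℕ, (u:ℂ) * (b i * ((i:ℂ) * (u:ℂ)^(i-1) * iteratedDeriv i f u
            + (u:ℂ)^i * iteratedDeriv (i+1) f u))
          = (i:ℂ) * b i * (u:ℂ)^i * iteratedDeriv i f u
            + b i * (u:ℂ)^(i+1) * iteratedDeriv (i+1) f u := by
        intro i
        cases i with
        | zero => simp; ring
        | succ k =>
          have : ((k+1) - 1 : ℕ) = k := rfl
          rw [this, pow_succ]
          ring
      rw [Finset.mul_sum, Finset.mul_sum]
      simp only [key1]
      rw [Finset.sum_add_distrib]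
      -- second piece reindex
      have key2 : ∑ i ∈ Finset.range (n+1), b i * (u:ℂ)^(i+1) * iteratedDeriv (i+1) f u
          = ∑ i ∈ Finset.range (n+1),
            (if i = 0 then 0 else b (i-1)) * (u:ℂ)^i * iteratedDeriv i f u := by
        rw [Finset.sum_range_succ' (fun i => (if i = 0 then 0 else b (i-1)) * (u:ℂ)^i * iteratedDeriv i f u) n]
        simp only [if_pos rfl, Nat.add_sub_cancel, if_neg (Nat.succ_ne_zero _)]
        rw [Finset.sum_range_succ]
        rw [hb0 n hjn]
        simp
      rw [key2, ← Finset.sum_add_distrib, ← Finset.sum_add_distrib]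
      apply Finset.sum_congr rfl
      intro i _
      ring

lemma MSNI.ae_diff_integral_real (q : ℝ → ℝ)
    (hq : ∀ a b : ℝ, 0 < a → 0 < b → IntervalIntegrable q volume a b)
    (hq0 : ∀ t, 0 ≤ q t) :
    ∀ᵐ u : ℝ, u ∈ Set.Ioi (0:ℝ) →
      DifferentiableAt ℝ (fun x => ∫ t in (1:ℝ)..x, q t) u := by
  have hmono : MonotoneOn (fun x => ∫ t in (1:ℝ)..x, q t) (Set.Ioi 0) := by
    intro x hx y hy hxy
    have h1 : (∫ t in (1:ℝ)..x, q t) + ∫ t in x..y, q t = ∫ t in (1:ℝ)..y, q t :=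
      intervalIntegral.integral_add_adjacent_intervals (hq 1 x one_pos hx) (hq x y hx hy)
    have h2 : 0 ≤ ∫ t in x..y, q t := intervalIntegral.integral_nonneg hxy (fun u _ => hq0 u)
    simp only
    linarith
  filter_upwards [hmono.ae_differentiableWithinAt_of_mem] with u hu huI
  exact (hu huI).differentiableAt (isOpen_Ioi.mem_nhds huI)

lemma MSNI.ae_diff_integral (m : ℝ → ℂ) (hm : LocallyIntegrableOn m (Set.Ioi 0) volume) :
    ∀ᵐ u : ℝ, u ∈ Set.Ioi (0:ℝ) → DifferentiableAt ℝ (fun x => ∫ t in (1:ℝ)..x, m t) u := by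
  have hII : ∀ a b : ℝ, 0 < a → 0 < b → IntervalIntegrable m volume a b := by
    intro a b ha hb
    apply IntegrableOn.intervalIntegrable
    apply hm.integrableOn_compact_subset _ isCompact_uIcc
    intro t ht
    exact lt_of_lt_of_le (lt_min ha hb) ht.1
  have hIIre : ∀ a b : ℝ, 0 < a → 0 < b →
      IntervalIntegrable (fun t => (m t).re) volume a b := by
    intro a b ha hb
    exact ⟨(hII a b ha hb).1.re, (hII a b ha hb).2.re⟩
  have hIIim : ∀ a b : ℝ, 0 < a → 0 < b →
      IntervalIntegrable (fun t => (m t).im) volume a b := by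
    intro a b ha hb
    exact ⟨(hII a b ha hb).1.im, (hII a b ha hb).2.im⟩
  -- the four nonnegative pieces
  have hpos : ∀ g : ℝ → ℝ, (∀ a b : ℝ, 0 < a → 0 < b → IntervalIntegrable g volume a b) →
      ∀ a b : ℝ, 0 < a → 0 < b → IntervalIntegrable (fun t => max (g t) 0) volume a b := by
    intro g hg a b ha hb
    exact ⟨(hg a b ha hb).1.pos_part, (hg a b ha hb).2.pos_part⟩
  have hIIreneg : ∀ a b : ℝ, 0 < a → 0 < b →
      IntervalIntegrable (fun t => -(m t).re) volume a b := by
    intro a b ha hb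
    exact (hIIre a b ha hb).neg
  have hIIimneg : ∀ a b : ℝ, 0 < a → 0 < b →
      IntervalIntegrable (fun t => -(m t).im) volume a b := by
    intro a b ha hb
    exact (hIIim a b ha hb).neg
  have hd1 := MSNI.ae_diff_integral_real (fun t => max ((m t).re) 0)
    (hpos _ hIIre) (fun t => le_max_right _ _)
  have hd2 := MSNI.ae_diff_integral_real (fun t => max (-(m t).re) 0)
    (hpos _ hIIreneg) (fun t => le_max_right _ _)
  have hd3 := MSNI.ae_diff_integral_real (fun t => max ((m t).im) 0)
    (hpos _ hIIim) (fun t => le_max_right _ _)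
  have hd4 := MSNI.ae_diff_integral_real (fun t => max (-(m t).im) 0)
    (hpos _ hIIimneg) (fun t => le_max_right _ _)
  filter_upwards [hd1, hd2, hd3, hd4] with u h1 h2 h3 h4 hu
  -- decomposition of the complex integral on `Ioi 0`
  have hdecomp : ∀ x ∈ Set.Ioi (0:ℝ), (∫ t in (1:ℝ)..x, m t)
      = ((((∫ t in (1:ℝ)..x, max ((m t).re) 0) - ∫ t in (1:ℝ)..x, max (-(m t).re) 0 : ℝ)) : ℂ)
        + ((((∫ t in (1:ℝ)..x, max ((m t).im) 0) - ∫ t in (1:ℝ)..x, max (-(m t).im) 0 : ℝ)) : ℂ) * Complex.I := by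
    intro x hx
    have hre : (∫ t in (1:ℝ)..x, (m t).re)
        = (∫ t in (1:ℝ)..x, max ((m t).re) 0) - ∫ t in (1:ℝ)..x, max (-(m t).re) 0 := by
      rw [← intervalIntegral.integral_sub (hpos _ hIIre 1 x one_pos hx)
        (hpos _ hIIreneg 1 x one_pos hx)]
      apply intervalIntegral.integral_congr
      intro t _
      simp only
      rcases le_total ((m t).re) 0 with h | h
      · rw [max_eq_right h, max_eq_left (by linarith)]; ring
      · rw [max_eq_left h, max_eq_right (by linarith)]; ring
    have him : (∫ t in (1:ℝ)..x, (m t).im)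
        = (∫ t in (1:ℝ)..x, max ((m t).im) 0) - ∫ t in (1:ℝ)..x, max (-(m t).im) 0 := by
      rw [← intervalIntegral.integral_sub (hpos _ hIIim 1 x one_pos hx)
        (hpos _ hIIimneg 1 x one_pos hx)]
      apply intervalIntegral.integral_congr
      intro t _
      simp only
      rcases le_total ((m t).im) 0 with h | h
      · rw [max_eq_right h, max_eq_left (by linarith)]; ring
      · rw [max_eq_left h, max_eq_right (by linarith)]; ring
    rw [← hre, ← him]
    have hIcre : IntervalIntegrable (fun t => (((m t).re : ℝ) : ℂ)) volume 1 x :=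
      ⟨(hIIre 1 x one_pos hx).1.ofReal, (hIIre 1 x one_pos hx).2.ofReal⟩
    have hIcim : IntervalIntegrable (fun t => (((m t).im : ℝ) : ℂ) * Complex.I) volume 1 x :=
      IntervalIntegrable.mul_const
        ⟨(hIIim 1 x one_pos hx).1.ofReal, (hIIim 1 x one_pos hx).2.ofReal⟩ _
    calc ∫ t in (1:ℝ)..x, m t
        = ∫ t in (1:ℝ)..x, ((((m t).re : ℝ) : ℂ) + (((m t).im : ℝ) : ℂ) * Complex.I) := by
          apply intervalIntegral.integral_congr
          intro t _
          simp [Complex.re_add_im]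
      _ = (∫ t in (1:ℝ)..x, (((m t).re : ℝ) : ℂ))
            + ∫ t in (1:ℝ)..x, (((m t).im : ℝ) : ℂ) * Complex.I :=
          intervalIntegral.integral_add hIcre hIcim
      _ = ((∫ t in (1:ℝ)..x, (m t).re : ℝ) : ℂ)
            + ((∫ t in (1:ℝ)..x, (m t).im : ℝ) : ℂ) * Complex.I := by
          rw [intervalIntegral.integral_mul_const, intervalIntegral.integral_ofReal,
            intervalIntegral.integral_ofReal]
  -- conclude
  have hev : (fun x => ∫ t in (1:ℝ)..x, m t) =ᶠ[nhds u]
      (fun x => ((((∫ t in (1:ℝ)..x, max ((m t).re) 0) - ∫ t in (1:ℝ)..x, max (-(m t).re) 0 : ℝ)) : ℂ)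
        + ((((∫ t in (1:ℝ)..x, max ((m t).im) 0) - ∫ t in (1:ℝ)..x, max (-(m t).im) 0 : ℝ)) : ℂ) * Complex.I) :=
    Filter.eventuallyEq_of_mem (isOpen_Ioi.mem_nhds hu) hdecomp
  apply DifferentiableAt.congr_of_eventuallyEq _ hev
  have hre' : DifferentiableAt ℝ (fun x : ℝ =>
      ((((∫ t in (1:ℝ)..x, max ((m t).re) 0) - ∫ t in (1:ℝ)..x, max (-(m t).re) 0 : ℝ)) : ℂ)) u := by
    have := ((h1 hu).sub (h2 hu))
    exact Complex.ofRealCLM.differentiableAt.comp u this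
  have him' : DifferentiableAt ℝ (fun x : ℝ =>
      ((((∫ t in (1:ℝ)..x, max ((m t).im) 0) - ∫ t in (1:ℝ)..x, max (-(m t).im) 0 : ℝ)) : ℂ)) u := by
    have := ((h3 hu).sub (h4 hu))
    exact Complex.ofRealCLM.differentiableAt.comp u this
  exact hre'.add (him'.mul_const Complex.I)

lemma MSNI.null_preimage_exp {s : Set ℝ} (hs : s ⊆ Set.Ioi 0) (h0 : volume s = 0) :
    volume {x : ℝ | Real.exp x ∈ s} = 0 := by
  have hsub : {x : ℝ | Real.exp x ∈ s} ⊆ Real.log '' s := by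
    intro x hx
    exact ⟨Real.exp x, hx, Real.log_exp x⟩
  apply measure_mono_null hsub
  apply addHaar_image_eq_zero_of_differentiableOn_of_addHaar_eq_zero volume _ h0
  intro u hu
  exact (Real.differentiableAt_log (ne_of_gt (hs hu))).differentiableWithinAt

lemma MSNI.integral_exp_image (g : ℝ → ℝ) :
    ∫ u in Set.Ioi (0:ℝ), g u = ∫ x : ℝ, Real.exp x * g (Real.exp x) := by
  have h := integral_image_eq_integral_abs_deriv_smul MeasurableSet.univ
    (fun x (_ : x ∈ Set.univ) => (Real.hasDerivAt_exp x).hasDerivWithinAt)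
    Real.exp_injective.injOn g
  rw [Set.image_univ, Real.range_exp] at h
  simpa [abs_of_pos (Real.exp_pos _), smul_eq_mul] using h

lemma MSNI.integrableOn_exp_image (g : ℝ → ℝ) :
    IntegrableOn g (Set.Ioi 0) volume ↔
      Integrable (fun x => Real.exp x * g (Real.exp x)) volume := by
  have h := integrableOn_image_iff_integrableOn_abs_deriv_smul MeasurableSet.univ
    (fun x (_ : x ∈ Set.univ) => (Real.hasDerivAt_exp x).hasDerivWithinAt)
    Real.exp_injective.injOn g
  rw [Set.image_univ, Real.range_exp] at h
  simpa [abs_of_pos (Real.exp_pos _), smul_eq_mul, IntegrableOn] using h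

/-- For `f ∈ W^{2,r}_c` (taken as its smooth, locally absolutely continuous
representative), the function `h(x) = e^{cx} f(e^x)` is `r` times differentiable
a.e., `h^{(r)} ∈ L²(ℝ)`, and `‖h^{(r)}‖_{L²(ℝ)} = ‖Θ_c^r f‖_{X²_c}`. -/
theorem mellin_sobolev_norm_identity (c : ℝ) (r : ℕ) (hr : 1 ≤ r) (f : ℝ → ℂ)
    (hf : MemXc2 c f)
    (hsm : ContDiffOn ℝ ((r - 1 : ℕ) : ℕ∞) f (Set.Ioi 0))
    (hAC : ∃ m : ℝ → ℂ, LocallyIntegrableOn m (Set.Ioi 0) volume ∧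
      ∀ x ∈ Set.Ioi (0:ℝ),
        iteratedDeriv (r - 1) f x = iteratedDeriv (r - 1) f 1 + ∫ u in (1:ℝ)..x, m u)
    (hΘ : MemXc2 c ((mellinD c)^[r] f)) :
    (∀ᵐ x : ℝ, DifferentiableAt ℝ
        (iteratedDeriv (r - 1) (fun y : ℝ => (Real.exp (c * y) : ℂ) * f (Real.exp y))) x) ∧
    MemLp (iteratedDeriv r (fun y : ℝ => (Real.exp (c * y) : ℂ) * f (Real.exp y))) 2 volume ∧
    Real.sqrt (∫ x : ℝ,
        ‖iteratedDeriv r (fun y : ℝ => (Real.exp (c * y) : ℂ) * f (Real.exp y)) x‖ ^ 2)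
      = Xnorm c ((mellinD c)^[r] f) := by
  clear hf
  obtain ⟨n, rfl⟩ : ∃ n, r = n + 1 := ⟨r - 1, (Nat.succ_pred_eq_of_pos hr).symm⟩
  simp only [Nat.add_sub_cancel] at hsm hAC ⊢
  set H : ℝ → ℂ := fun y : ℝ => (Real.exp (c * y) : ℂ) * f (Real.exp y) with hH
  have hdiff : ∀ i, i < n → ∀ u ∈ Set.Ioi (0:ℝ), DifferentiableAt ℝ (iteratedDeriv i f) u :=
    MSNI.itf_diff hsm
  have hgj : ∀ j k : ℕ, j + k ≤ n → ContDiffOn ℝ ((k : ℕ) : ℕ∞) ((mellinD c)^[j] f) (Set.Ioi 0) :=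
    MSNI.gj_contDiffOn hsm
  have hgjdiff : ∀ j, j < n → ∀ u ∈ Set.Ioi (0:ℝ),
      DifferentiableAt ℝ ((mellinD c)^[j] f) u := by
    intro j hj u hu
    have h := (hgj j 1 (by omega)).differentiableOn (by simp)
    exact (h u hu).differentiableAt (isOpen_Ioi.mem_nhds hu)
  -- the everywhere identity for orders up to n
  have hB : ∀ j, j ≤ n → ∀ x : ℝ,
      iteratedDeriv j H x = (Real.exp (c * x) : ℂ) * ((mellinD c)^[j] f) (Real.exp x) := by
    intro j
    induction j with
    | zero =>
      intro _ x
      simp only [iteratedDeriv_zero, Function.iterate_zero, id_eq, hH]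
    | succ j ih =>
      intro hj x
      have hfun : iteratedDeriv j H
          = fun y => (Real.exp (c * y) : ℂ) * ((mellinD c)^[j] f) (Real.exp y) :=
        funext (ih (by omega))
      rw [iteratedDeriv_succ, hfun,
        (MSNI.hasDerivAt_step c _ x (hgjdiff j (by omega) _ (Set.mem_Ioi.mpr (Real.exp_pos x)))).deriv,
        Function.iterate_succ_apply']
  -- a.e. differentiability of `iteratedDeriv n f` on `Ioi 0`
  obtain ⟨m, hmloc, hmrep⟩ := hAC
  have hae_itf : ∀ᵐ u : ℝ, u ∈ Set.Ioi (0:ℝ) → DifferentiableAt ℝ (iteratedDeriv n f) u := by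
    filter_upwards [MSNI.ae_diff_integral m hmloc] with u hu huI
    have hev : iteratedDeriv n f =ᶠ[nhds u]
        (fun x => iteratedDeriv n f 1 + ∫ t in (1:ℝ)..x, m t) :=
      Filter.eventuallyEq_of_mem (isOpen_Ioi.mem_nhds huI) hmrep
    exact DifferentiableAt.congr_of_eventuallyEq
      ((differentiableAt_const _).add (hu huI)) hev
  -- a.e. differentiability of `(mellinD c)^[n] f` on `Ioi 0`
  obtain ⟨b, hb0, hbrep⟩ := MSNI.gj_rep c f n hsm n le_rfl
  have hae_gn : ∀ᵐ u : ℝ, u ∈ Set.Ioi (0:ℝ) →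
      DifferentiableAt ℝ ((mellinD c)^[n] f) u := by
    filter_upwards [hae_itf] with u hd hu
    have hev : ((mellinD c)^[n] f) =ᶠ[nhds u]
        (fun v => ∑ i ∈ Finset.range (n+1), b i * (v:ℂ)^i * iteratedDeriv i f v) :=
      Filter.eventuallyEq_of_mem (isOpen_Ioi.mem_nhds hu) hbrep
    apply DifferentiableAt.congr_of_eventuallyEq _ hev
    apply DifferentiableAt.fun_sum
    intro i hi
    have hpow : DifferentiableAt ℝ (fun v : ℝ => (v:ℂ)^i) u :=
      ((hasDerivAt_pow i ((u : ℝ) : ℂ)).comp_ofReal).differentiableAt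
    rcases lt_or_ge i n with hin | hin
    · exact (hpow.const_mul (b i)).mul (hdiff i hin u hu)
    · have hieq : i = n := by
        have := Finset.mem_range.mp hi
        omega
      subst hieq
      exact (hpow.const_mul (b i)).mul (hd hu)
  -- transfer through `exp`
  have hae_exp : ∀ᵐ x : ℝ, DifferentiableAt ℝ ((mellinD c)^[n] f) (Real.exp x) := by
    rw [ae_iff] at hae_gn ⊢
    have hsub : {x : ℝ | ¬ DifferentiableAt ℝ ((mellinD c)^[n] f) (Real.exp x)}
        ⊆ {x : ℝ | Real.exp x ∈
            {u : ℝ | ¬ (u ∈ Set.Ioi (0:ℝ) → DifferentiableAt ℝ ((mellinD c)^[n] f) u)}} := by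
      intro x hx
      simp only [Set.mem_setOf_eq, Classical.not_imp] at hx ⊢
      exact ⟨Set.mem_Ioi.mpr (Real.exp_pos x), hx⟩
    apply measure_mono_null hsub
    apply MSNI.null_preimage_exp _ hae_gn
    intro u hu
    simp only [Set.mem_setOf_eq, Classical.not_imp] at hu
    exact hu.1
  have hfunn : iteratedDeriv n H
      = fun y => (Real.exp (c * y) : ℂ) * ((mellinD c)^[n] f) (Real.exp y) :=
    funext (hB n le_rfl)
  -- conclusion 1
  have hconc1 : ∀ᵐ x : ℝ, DifferentiableAt ℝ (iteratedDeriv n H) x := by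
    filter_upwards [hae_exp] with x hx
    rw [hfunn]
    exact (MSNI.hasDerivAt_step c _ x hx).differentiableAt
  -- the a.e. identity at order n+1
  have hae_id : iteratedDeriv (n+1) H
      =ᵐ[volume] (fun x => (Real.exp (c * x) : ℂ) * ((mellinD c)^[n+1] f) (Real.exp x)) := by
    filter_upwards [hae_exp] with x hx
    rw [iteratedDeriv_succ, hfunn, (MSNI.hasDerivAt_step c _ x hx).deriv,
      Function.iterate_succ_apply']
  -- measurability
  have hfc : Continuous fun x : ℝ => f (Real.exp x) := by
    rw [continuous_iff_continuousAt]
    intro x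
    exact (hsm.continuousOn.continuousAt
      (isOpen_Ioi.mem_nhds (Set.mem_Ioi.mpr (Real.exp_pos x)))).comp
      Real.continuous_exp.continuousAt
  have hHcont : Continuous H := by
    apply Continuous.mul _ hfc
    exact Complex.continuous_ofReal.comp
      (Real.continuous_exp.comp (continuous_const.mul continuous_id))
  have hmeasH : Measurable (iteratedDeriv (n+1) H) := by
    rw [iteratedDeriv_succ]
    exact measurable_deriv _
  set g : ℝ → ℂ := (mellinD c)^[n+1] f with hg
  -- pointwise identities for the change of variables
  have hexp2 : ∀ a : ℝ, (Real.exp a)^2 = Real.exp (2*a) := by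
    intro a
    rw [sq, ← Real.exp_add]
    ring_nf
  have hptw : ∀ x : ℝ,
      Real.exp x * ‖g (Real.exp x) * ((Real.exp x ^ (c - 1/2) : ℝ) : ℂ)‖^2
        = ‖(Real.exp (c * x) : ℂ) * g (Real.exp x)‖^2 := by
    intro x
    rw [norm_mul, norm_mul, Complex.norm_real, Complex.norm_real, Real.norm_eq_abs,
      Real.norm_eq_abs, Real.abs_exp, _root_.abs_of_nonneg (Real.rpow_nonneg (Real.exp_pos x).le _),
      Real.rpow_def_of_pos (Real.exp_pos x), Real.log_exp]
    rw [mul_pow, mul_pow, hexp2, hexp2]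
    rw [show Real.exp x * (‖g (Real.exp x)‖ ^ 2 * Real.exp (2 * (x * (c - 1/2))))
        = Real.exp (x + 2 * (x * (c - 1/2))) * ‖g (Real.exp x)‖ ^ 2 by
      rw [Real.exp_add]; ring]
    rw [show x + 2 * (x * (c - 1/2)) = 2 * (c * x) by ring]
  have hptw2 : ∀ u ∈ Set.Ioi (0:ℝ),
      ‖g u * ((u ^ (c - 1/2) : ℝ) : ℂ)‖^2 = ‖g u‖^2 * u ^ (2 * c - 1) := by
    intro u hu
    rw [norm_mul, Complex.norm_real, Real.norm_eq_abs,
      _root_.abs_of_nonneg (Real.rpow_nonneg (le_of_lt hu) _), mul_pow]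
    congr 1
    rw [← Real.rpow_natCast (u ^ (c - 1/2)) 2, ← Real.rpow_mul (le_of_lt hu)]
    congr 1
    push_cast
    ring
  -- integrability from the hypothesis hΘ
  have hΘ' : MemLp (fun u : ℝ => g u * ((u ^ (c - 1/2) : ℝ) : ℂ)) 2
      (volume.restrict (Set.Ioi 0)) := hΘ
  have hθInt : IntegrableOn (fun u : ℝ => ‖g u * ((u ^ (c - 1/2) : ℝ) : ℂ)‖^2)
      (Set.Ioi 0) volume :=
    (memLp_two_iff_integrable_sq_norm hΘ'.aestronglyMeasurable).mp hΘ'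
  have hI2 : Integrable (fun x : ℝ => ‖(Real.exp (c * x) : ℂ) * g (Real.exp x)‖^2) volume := by
    have h := (MSNI.integrableOn_exp_image
      (fun u : ℝ => ‖g u * ((u ^ (c - 1/2) : ℝ) : ℂ)‖^2)).mp hθInt
    exact h.congr (ae_of_all _ hptw)
  have hψmeas : AEStronglyMeasurable
      (fun x : ℝ => (Real.exp (c * x) : ℂ) * g (Real.exp x)) volume :=
    hmeasH.aestronglyMeasurable.congr hae_id
  have hψ : MemLp (fun x : ℝ => (Real.exp (c * x) : ℂ) * g (Real.exp x)) 2 volume :=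
    (memLp_two_iff_integrable_sq_norm hψmeas).mpr hI2
  refine ⟨hconc1, MemLp.ae_eq hae_id.symm hψ, ?_⟩
  unfold Xnorm
  congr 1
  calc ∫ x : ℝ, ‖iteratedDeriv (n+1) H x‖^2
      = ∫ x : ℝ, ‖(Real.exp (c * x) : ℂ) * g (Real.exp x)‖^2 :=
        integral_congr_ae (hae_id.mono fun x hx => by simp only [hx])
    _ = ∫ x : ℝ, Real.exp x * ‖g (Real.exp x) * ((Real.exp x ^ (c - 1/2) : ℝ) : ℂ)‖^2 :=
        integral_congr_ae (ae_of_all _ fun x => (hptw x).symm)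
    _ = ∫ u in Set.Ioi (0:ℝ), ‖g u * ((u ^ (c - 1/2) : ℝ) : ℂ)‖^2 :=
        (MSNI.integral_exp_image (fun u : ℝ => ‖g u * ((u ^ (c - 1/2) : ℝ) : ℂ)‖^2)).symm
    _ = ∫ u in Set.Ioi (0:ℝ), ‖g u‖^2 * u ^ (2 * c - 1) :=
        setIntegral_congr_fun measurableSet_Ioi hptw2
end
end

section
/- Let c ∈ ℝ, T > 0, and let f : (0,∞) → ℂ be a function with u ↦ f(u)u^{c-1/2} ∈ L²(0,∞) such that the function h(x) = e^{cx} f(e^x), x ∈ ℝ, extends to an entire function of exponential type T (i.e. |h(z)| ≤ C e^{T|Im z|} for all z ∈ ℂ for some C > 0). Then M²[f](c+it) = 0 for almost every t with |t| > T; that is, f is Mellin bandlimited to [-T,T]. -/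
open MeasureTheory Filter Complex Set
open scoped ContDiff ENNReal

noncomputable section

set_option maxHeartbeats 1000000

private lemma hasDerivAt_cexp_mul (w : ℂ) (t : ℝ) :
    HasDerivAt (fun s : ℝ => Complex.exp (↑s * w)) (w * Complex.exp (↑t * w)) t := by
  have h1 : HasDerivAt (fun z : ℂ => z * w) w (t : ℂ) := hasDerivAt_mul_const w
  have h2 := (Complex.hasDerivAt_exp ((t : ℂ) * w)).comp (t : ℂ) h1
  simpa [Function.comp, mul_comm] using h2.comp_ofReal

private lemma ofReal_hasCompactSupport {g : ℝ → ℝ} (hgs : HasCompactSupport g) :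
    HasCompactSupport (fun t : ℝ => (g t : ℂ)) :=
  hgs.comp_left (g := fun r : ℝ => (r : ℂ)) Complex.ofReal_zero

private lemma psi_differentiable (g : ℝ → ℝ) (hgc : Continuous g)
    (hgs : HasCompactSupport g) :
    Differentiable ℂ (fun z : ℂ => ∫ t : ℝ, (g t : ℂ) * Complex.exp (↑t * z * I)) := by
  intro z₀
  have hker : ∀ z : ℂ, Continuous fun t : ℝ => (g t : ℂ) * Complex.exp (↑t * z * I) := by
    intro z
    exact (Complex.continuous_ofReal.comp hgc).mul
      (Complex.continuous_exp.comp ((Complex.continuous_ofReal.mul continuous_const).mul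
        continuous_const))
  have hmeas : ∀ᶠ z in nhds z₀, AEStronglyMeasurable
      (fun t : ℝ => (g t : ℂ) * Complex.exp (↑t * z * I)) volume :=
    Eventually.of_forall fun z => (hker z).aestronglyMeasurable
  have hint : Integrable (fun t : ℝ => (g t : ℂ) * Complex.exp (↑t * z₀ * I)) volume :=
    (hker z₀).integrable_of_hasCompactSupport (ofReal_hasCompactSupport hgs).mul_right
  have hmeas' : AEStronglyMeasurable
      (fun t : ℝ => (g t : ℂ) * (Complex.exp (↑t * z₀ * I) * (↑t * I))) volume := by
    apply Continuous.aestronglyMeasurable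
    exact (Complex.continuous_ofReal.comp hgc).mul
      ((Complex.continuous_exp.comp ((Complex.continuous_ofReal.mul continuous_const).mul
        continuous_const)).mul (Complex.continuous_ofReal.mul continuous_const))
  have hbound : ∀ᵐ t : ℝ, ∀ z ∈ Metric.ball z₀ 1,
      ‖(g t : ℂ) * (Complex.exp (↑t * z * I) * (↑t * I))‖ ≤
        |g t| * (Real.exp (|t| * (|z₀.im| + 1)) * |t|) := by
    refine Eventually.of_forall fun t z hz => ?_
    have him : |z.im| ≤ |z₀.im| + 1 := by
      have h1 : |z.im - z₀.im| ≤ dist z z₀ := by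
        rw [Complex.dist_eq]
        simpa using Complex.abs_im_le_norm (z - z₀)
      have h2 : dist z z₀ < 1 := Metric.mem_ball.mp hz
      have h3 := abs_sub_abs_le_abs_sub z.im z₀.im
      linarith
    have hre : ‖Complex.exp (↑t * z * I)‖ = Real.exp (-(t * z.im)) := by
      rw [Complex.norm_exp]
      congr 1
      simp [Complex.mul_re, Complex.mul_im]
    have h3 : Real.exp (-(t * z.im)) ≤ Real.exp (|t| * (|z₀.im| + 1)) := by
      apply Real.exp_le_exp.mpr
      calc -(t * z.im) ≤ |t * z.im| := neg_le_abs _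
        _ = |t| * |z.im| := abs_mul _ _
        _ ≤ |t| * (|z₀.im| + 1) := mul_le_mul_of_nonneg_left him (abs_nonneg _)
    rw [norm_mul, norm_mul, norm_mul, hre]
    have h4 : ‖(t : ℂ)‖ * ‖I‖ = |t| := by simp
    rw [h4]
    have h5 : ‖(g t : ℂ)‖ = |g t| := by simp
    rw [h5]
    exact mul_le_mul_of_nonneg_left
      (mul_le_mul_of_nonneg_right h3 (abs_nonneg _)) (abs_nonneg _)
  have hbint : Integrable (fun t : ℝ => |g t| * (Real.exp (|t| * (|z₀.im| + 1)) * |t|)) volume := by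
    apply Continuous.integrable_of_hasCompactSupport
    · exact hgc.abs.mul ((Real.continuous_exp.comp (_root_.continuous_abs.mul continuous_const)).mul
        continuous_abs)
    · exact (hgs.comp_left (g := fun r : ℝ => |r|) abs_zero).mul_right
  have hdiff : ∀ᵐ t : ℝ, ∀ z ∈ Metric.ball z₀ 1,
      HasDerivAt (fun z : ℂ => (g t : ℂ) * Complex.exp (↑t * z * I))
        ((g t : ℂ) * (Complex.exp (↑t * z * I) * (↑t * I))) z := by
    refine Eventually.of_forall fun t z _ => ?_
    have h1 : HasDerivAt (fun z : ℂ => ↑t * z * I) (↑t * I) z := by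
      simpa using ((hasDerivAt_id z).const_mul (t : ℂ)).mul_const I
    exact (h1.cexp).const_mul (g t : ℂ)
  have key := hasDerivAt_integral_of_dominated_loc_of_deriv_le (Metric.ball_mem_nhds z₀ one_pos) hmeas hint hmeas'
    hbound hbint hdiff
  exact key.2.differentiableAt

private lemma parts_step (h : ℝ → ℝ) (hh : ContDiff ℝ ∞ h) (hhs : HasCompactSupport h)
    (w : ℂ) (hw : w ≠ 0) :
    ∫ t : ℝ, (h t : ℂ) * Complex.exp (↑t * w)
      = -w⁻¹ * ∫ t : ℝ, ((deriv h t : ℝ) : ℂ) * Complex.exp (↑t * w) := by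
  have hdc : Continuous (deriv h) := (contDiff_infty_iff_deriv.mp hh).2.continuous
  have hu : ∀ t : ℝ, HasDerivAt (fun t : ℝ => (h t : ℂ)) (((deriv h t : ℝ) : ℂ)) t :=
    fun t => ((hh.differentiable (by simp)).differentiableAt.hasDerivAt).ofReal_comp
  have hv : ∀ t : ℝ, HasDerivAt (fun t : ℝ => w⁻¹ * Complex.exp (↑t * w))
      (Complex.exp (↑t * w)) t := by
    intro t
    have := (hasDerivAt_cexp_mul w t).const_mul w⁻¹
    rwa [← mul_assoc, inv_mul_cancel₀ hw, one_mul] at this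
  have hexpc : Continuous (fun t : ℝ => Complex.exp (↑t * w)) :=
    Complex.continuous_exp.comp (Complex.continuous_ofReal.mul continuous_const)
  have huv' : Integrable ((fun t : ℝ => (h t : ℂ)) * fun t : ℝ => Complex.exp (↑t * w)) volume := by
    apply Continuous.integrable_of_hasCompactSupport
    · exact (Complex.continuous_ofReal.comp hh.continuous).mul hexpc
    · exact (ofReal_hasCompactSupport hhs).mul_right
  have hu'v : Integrable ((fun t : ℝ => ((deriv h t : ℝ) : ℂ)) *
      fun t : ℝ => w⁻¹ * Complex.exp (↑t * w)) volume := by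
    apply Continuous.integrable_of_hasCompactSupport
    · exact (Complex.continuous_ofReal.comp hdc).mul (continuous_const.mul hexpc)
    · exact (ofReal_hasCompactSupport hhs.deriv).mul_right
  have huv : Integrable ((fun t : ℝ => (h t : ℂ)) *
      fun t : ℝ => w⁻¹ * Complex.exp (↑t * w)) volume := by
    apply Continuous.integrable_of_hasCompactSupport
    · exact (Complex.continuous_ofReal.comp hh.continuous).mul (continuous_const.mul hexpc)
    · exact (ofReal_hasCompactSupport hhs).mul_right
  have key := MeasureTheory.integral_mul_deriv_eq_deriv_mul_of_integrable (fun t _ => hu t) (fun t _ => hv t) huv' hu'v huv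
  rw [key]
  rw [← MeasureTheory.integral_const_mul]
  rw [← integral_neg]
  congr 1
  funext t
  ring

private lemma psi_bound (g : ℝ → ℝ) (hg : ContDiff ℝ ∞ g) (hgs : HasCompactSupport g)
    {a : ℝ} (hsupp : tsupport g ⊆ Set.Ici a) {z : ℂ} (hz : z ≠ 0) (hzim : 0 ≤ z.im) :
    ‖∫ t : ℝ, (g t : ℂ) * Complex.exp (↑t * z * I)‖ ≤
      (∫ t : ℝ, |deriv (deriv g) t|) * Real.exp (-(a * z.im)) / ‖z‖ ^ 2 := by
  have hw : z * I ≠ 0 := mul_ne_zero hz Complex.I_ne_zero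
  have hdg : ContDiff ℝ ∞ (deriv g) := (contDiff_infty_iff_deriv.mp hg).2
  have e1 : (fun t : ℝ => (g t : ℂ) * Complex.exp (↑t * z * I))
      = fun t : ℝ => (g t : ℂ) * Complex.exp (↑t * (z * I)) := by
    funext t; rw [mul_assoc]
  rw [e1, parts_step g hg hgs (z * I) hw, parts_step (deriv g) hdg hgs.deriv (z * I) hw]
  -- norm bound for the double-derivative integral
  have hg2c : Continuous (deriv (deriv g)) := (contDiff_infty_iff_deriv.mp hdg).2.continuous
  have hsupp2 : ∀ t : ℝ, deriv (deriv g) t ≠ 0 → a ≤ t := by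
    intro t ht
    have h1 : tsupport (deriv g) ⊆ tsupport g :=
      closure_minimal support_deriv_subset (isClosed_tsupport g)
    exact hsupp (h1 (support_deriv_subset (Function.mem_support.mpr ht)))
  have hnorm : ‖∫ t : ℝ, ((deriv (deriv g) t : ℝ) : ℂ) * Complex.exp (↑t * (z * I))‖ ≤
      (∫ t : ℝ, |deriv (deriv g) t|) * Real.exp (-(a * z.im)) := by
    have hptwise : ∀ t : ℝ, ‖((deriv (deriv g) t : ℝ) : ℂ) * Complex.exp (↑t * (z * I))‖ ≤
        |deriv (deriv g) t| * Real.exp (-(a * z.im)) := by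
      intro t
      rw [norm_mul]
      have h5 : ‖((deriv (deriv g) t : ℝ) : ℂ)‖ = |deriv (deriv g) t| := by simp
      have hre : ‖Complex.exp (↑t * (z * I))‖ = Real.exp (-(t * z.im)) := by
        rw [Complex.norm_exp]
        congr 1
        simp [Complex.mul_re, Complex.mul_im]
      rw [h5, hre]
      by_cases ht : deriv (deriv g) t = 0
      · simp [ht]
      · have hta : a ≤ t := hsupp2 t ht
        apply mul_le_mul_of_nonneg_left _ (abs_nonneg _)
        apply Real.exp_le_exp.mpr
        have := mul_le_mul_of_nonneg_right hta hzim
        linarith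
    have hic : Continuous fun t : ℝ => ((deriv (deriv g) t : ℝ) : ℂ) * Complex.exp (↑t * (z * I)) :=
      (Complex.continuous_ofReal.comp hg2c).mul
        (Complex.continuous_exp.comp (Complex.continuous_ofReal.mul continuous_const))
    have hi1 : Integrable (fun t : ℝ => ‖((deriv (deriv g) t : ℝ) : ℂ) * Complex.exp (↑t * (z * I))‖)
        volume := by
      apply (hic.norm).integrable_of_hasCompactSupport
      exact ((ofReal_hasCompactSupport hgs.deriv.deriv).mul_right).norm
    have hi2 : Integrable (fun t : ℝ => |deriv (deriv g) t| * Real.exp (-(a * z.im))) volume := by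
      apply Integrable.mul_const
      exact (hg2c.abs).integrable_of_hasCompactSupport
        (hgs.deriv.deriv.comp_left (g := fun r : ℝ => |r|) abs_zero)
    calc ‖∫ t : ℝ, ((deriv (deriv g) t : ℝ) : ℂ) * Complex.exp (↑t * (z * I))‖
        ≤ ∫ t : ℝ, ‖((deriv (deriv g) t : ℝ) : ℂ) * Complex.exp (↑t * (z * I))‖ :=
          norm_integral_le_integral_norm _
      _ ≤ ∫ t : ℝ, |deriv (deriv g) t| * Real.exp (-(a * z.im)) :=
          integral_mono hi1 hi2 hptwise
      _ = (∫ t : ℝ, |deriv (deriv g) t|) * Real.exp (-(a * z.im)) := by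
          rw [MeasureTheory.integral_mul_const]
  have habs : ‖(z * I)⁻¹‖ = (‖z‖)⁻¹ := by
    simp
  calc ‖-(z * I)⁻¹ * (-(z * I)⁻¹ *
        ∫ t : ℝ, ((deriv (deriv g) t : ℝ) : ℂ) * Complex.exp (↑t * (z * I)))‖
      = (‖z‖)⁻¹ * ((‖z‖)⁻¹ *
        ‖∫ t : ℝ, ((deriv (deriv g) t : ℝ) : ℂ) * Complex.exp (↑t * (z * I))‖) := by
        simp only [norm_mul, norm_neg, habs]
    _ ≤ (‖z‖)⁻¹ * ((‖z‖)⁻¹ *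
        ((∫ t : ℝ, |deriv (deriv g) t|) * Real.exp (-(a * z.im)))) := by
        apply mul_le_mul_of_nonneg_left _ (by positivity)
        exact mul_le_mul_of_nonneg_left hnorm (by positivity)
    _ = (∫ t : ℝ, |deriv (deriv g) t|) * Real.exp (-(a * z.im)) / ‖z‖ ^ 2 := by
        field_simp

private lemma contour_vanish (C B T a : ℝ) (hC : 0 ≤ C) (hB : 0 ≤ B) (hTa : T < a)
    (H ψ : ℂ → ℂ) (hH : Differentiable ℂ H) (hψ : Differentiable ℂ ψ)
    (hHb : ∀ z : ℂ, ‖H z‖ ≤ C * Real.exp (T * |z.im|))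
    (hψb : ∀ z : ℂ, z ≠ 0 → 0 ≤ z.im →
      ‖ψ z‖ ≤ B * Real.exp (-(a * z.im)) / ‖z‖ ^ 2) :
    Tendsto (fun R : ℝ => ∫ x in -R..R, ψ ↑x * H ↑x) atTop (nhds 0) := by
  set δ := a - T with hδ
  have hδ0 : 0 < δ := sub_pos.mpr hTa
  set K := C * B with hKdef
  have hK : 0 ≤ K := mul_nonneg hC hB
  have hΦ : ∀ z : ℂ, z ≠ 0 → 0 ≤ z.im →
      ‖ψ z * H z‖ ≤ K * Real.exp (-(δ * z.im)) / ‖z‖ ^ 2 := by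
    intro z h0 him
    rw [norm_mul]
    have h1 := hψb z h0 him
    have h2 := hHb z
    calc ‖ψ z‖ * ‖H z‖ ≤ (B * Real.exp (-(a * z.im)) / ‖z‖ ^ 2) *
          (C * Real.exp (T * |z.im|)) :=
        mul_le_mul h1 h2 (norm_nonneg _) (by positivity)
      _ = K * (Real.exp (-(a * z.im)) * Real.exp (T * z.im)) / ‖z‖ ^ 2 := by
          rw [_root_.abs_of_nonneg him, hKdef]; ring
      _ = K * Real.exp (-(δ * z.im)) / ‖z‖ ^ 2 := by
          rw [← Real.exp_add]
          congr 2
          rw [hδ]; ring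
  have main : ∀ R : ℝ, 1 ≤ R → ‖∫ x in -R..R, ψ ↑x * H ↑x‖ ≤
      2 * K * Real.exp (-(δ * R)) + (K / R + K / R) := by
    intro R hR
    have hR0 : 0 < R := lt_of_lt_of_le one_pos hR
    have rect := Complex.integral_boundary_rect_eq_zero_of_differentiableOn
      (fun z => ψ z * H z) (⟨-R, 0⟩ : ℂ) (⟨R, R⟩ : ℂ) ((hψ.mul hH).differentiableOn)
    simp only [show ((⟨-R, 0⟩ : ℂ)).re = -R from rfl, show ((⟨-R, 0⟩ : ℂ)).im = 0 from rfl,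
      show ((⟨R, R⟩ : ℂ)).re = R from rfl, show ((⟨R, R⟩ : ℂ)).im = R from rfl,
      Complex.ofReal_zero, zero_mul, add_zero] at rect
    -- rect : (∫ x in -R..R, ψ x * H x) - (∫ x in -R..R, Φ(x + R I))
    --        + I • (∫ y in 0..R, Φ(R + y I)) - I • (∫ y in 0..R, Φ(-R + y I)) = 0
    have hsolve : (∫ x in (-R : ℝ)..R, ψ ↑x * H ↑x)
        = (∫ x in (-R : ℝ)..R, ψ (↑x + ↑R * I) * H (↑x + ↑R * I))
          - I • (∫ y in (0 : ℝ)..R, ψ (↑R + ↑y * I) * H (↑R + ↑y * I))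
          + I • (∫ y in (0 : ℝ)..R, ψ (↑(-R) + ↑y * I) * H (↑(-R) + ↑y * I)) := by
      linear_combination rect
    rw [hsolve]
    have htop : ‖∫ x in (-R : ℝ)..R, ψ (↑x + ↑R * I) * H (↑x + ↑R * I)‖ ≤
        2 * K * Real.exp (-(δ * R)) := by
      have hbd : ∀ x ∈ Set.uIoc (-R) R, ‖ψ (↑x + ↑R * I) * H (↑x + ↑R * I)‖ ≤
          K * Real.exp (-(δ * R)) / R ^ 2 := by
        intro x _
        have him : ((x : ℂ) + ↑R * I).im = R := by simp
        have h0 : ((x : ℂ) + ↑R * I) ≠ 0 := by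
          intro h
          rw [Complex.ext_iff] at h
          simp at h
          exact hR0.ne' (by simpa [him] using h.2)
        have habs : R ^ 2 ≤ ‖((x : ℂ) + ↑R * I)‖ ^ 2 := by
          have := Complex.abs_im_le_norm ((x : ℂ) + ↑R * I)
          rw [him] at this
          nlinarith [norm_nonneg ((x : ℂ) + ↑R * I), abs_of_pos hR0]
        calc ‖ψ (↑x + ↑R * I) * H (↑x + ↑R * I)‖
            ≤ K * Real.exp (-(δ * ((x : ℂ) + ↑R * I).im)) /
              ‖((x : ℂ) + ↑R * I)‖ ^ 2 := hΦ _ h0 (by rw [him]; exact hR0.le)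
          _ ≤ K * Real.exp (-(δ * R)) / R ^ 2 := by
              rw [him]
              apply div_le_div_of_nonneg_left _ (by positivity) habs
              positivity
      calc ‖∫ x in (-R : ℝ)..R, ψ (↑x + ↑R * I) * H (↑x + ↑R * I)‖
          ≤ K * Real.exp (-(δ * R)) / R ^ 2 * |R - (-R)| :=
            intervalIntegral.norm_integral_le_of_norm_le_const hbd
        _ ≤ 2 * K * Real.exp (-(δ * R)) := by
            rw [abs_of_pos (by linarith : (0:ℝ) < R - (-R))]
            have hRR : R ≤ R ^ 2 := by nlinarith
            calc K * Real.exp (-(δ * R)) / R ^ 2 * (R - -R)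
                = 2 * (K * Real.exp (-(δ * R))) * (R / R ^ 2) := by ring
              _ ≤ 2 * (K * Real.exp (-(δ * R))) * 1 := by
                  apply mul_le_mul_of_nonneg_left _ (by positivity)
                  rw [div_le_one (by positivity)]
                  exact hRR
              _ = 2 * K * Real.exp (-(δ * R)) := by ring
    have hside : ∀ s : ℝ, |s| = R → ‖∫ y in (0 : ℝ)..R, ψ (↑s + ↑y * I) * H (↑s + ↑y * I)‖ ≤
        K / R := by
      intro s hs
      have hbd : ∀ y ∈ Set.uIoc (0 : ℝ) R, ‖ψ (↑s + ↑y * I) * H (↑s + ↑y * I)‖ ≤ K / R ^ 2 := by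
        intro y hy
        have hy0 : 0 < y := by
          rw [Set.uIoc_of_le hR0.le] at hy
          exact hy.1
        have him : ((s : ℂ) + ↑y * I).im = y := by simp
        have hre : ((s : ℂ) + ↑y * I).re = s := by simp
        have h0 : ((s : ℂ) + ↑y * I) ≠ 0 := by
          intro h
          rw [Complex.ext_iff] at h
          simp at h
          have : |s| = 0 := by rw [h.1]; simp
          rw [hs] at this
          exact hR0.ne' this
        have habs : R ^ 2 ≤ ‖((s : ℂ) + ↑y * I)‖ ^ 2 := by
          have h1 := Complex.abs_re_le_norm ((s : ℂ) + ↑y * I)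
          rw [hre, hs] at h1
          nlinarith [norm_nonneg ((s : ℂ) + ↑y * I)]
        calc ‖ψ (↑s + ↑y * I) * H (↑s + ↑y * I)‖
            ≤ K * Real.exp (-(δ * ((s : ℂ) + ↑y * I).im)) /
              ‖((s : ℂ) + ↑y * I)‖ ^ 2 := hΦ _ h0 (by rw [him]; exact hy0.le)
          _ ≤ K * 1 / R ^ 2 := by
              apply div_le_div₀ (by positivity) _ (by positivity) habs
              apply mul_le_mul_of_nonneg_left _ hK
              rw [him]
              apply Real.exp_le_one_iff.mpr
              rw [neg_nonpos]
              positivity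
          _ = K / R ^ 2 := by rw [mul_one]
      calc ‖∫ y in (0 : ℝ)..R, ψ (↑s + ↑y * I) * H (↑s + ↑y * I)‖
          ≤ K / R ^ 2 * |R - 0| :=
            intervalIntegral.norm_integral_le_of_norm_le_const hbd
        _ = K / R ^ 2 * R := by rw [sub_zero, abs_of_pos hR0]
        _ ≤ K / R := by
            rw [div_mul_eq_mul_div, div_le_div_iff₀ (by positivity) hR0]
            nlinarith
    have e1 := hside R (abs_of_pos hR0)
    have e2 := hside (-R) (by rw [abs_neg]; exact abs_of_pos hR0)
    calc ‖(∫ x in (-R : ℝ)..R, ψ (↑x + ↑R * I) * H (↑x + ↑R * I))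
          - I • (∫ y in (0 : ℝ)..R, ψ (↑R + ↑y * I) * H (↑R + ↑y * I))
          + I • (∫ y in (0 : ℝ)..R, ψ (↑(-R) + ↑y * I) * H (↑(-R) + ↑y * I))‖
        ≤ ‖(∫ x in (-R : ℝ)..R, ψ (↑x + ↑R * I) * H (↑x + ↑R * I))
          - I • (∫ y in (0 : ℝ)..R, ψ (↑R + ↑y * I) * H (↑R + ↑y * I))‖
          + ‖I • (∫ y in (0 : ℝ)..R, ψ (↑(-R) + ↑y * I) * H (↑(-R) + ↑y * I))‖ :=
          norm_add_le _ _
      _ ≤ ‖∫ x in (-R : ℝ)..R, ψ (↑x + ↑R * I) * H (↑x + ↑R * I)‖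
          + ‖I • (∫ y in (0 : ℝ)..R, ψ (↑R + ↑y * I) * H (↑R + ↑y * I))‖
          + ‖I • (∫ y in (0 : ℝ)..R, ψ (↑(-R) + ↑y * I) * H (↑(-R) + ↑y * I))‖ := by
          gcongr
          exact norm_sub_le _ _
      _ ≤ 2 * K * Real.exp (-(δ * R)) + (K / R + K / R) := by
          rw [norm_smul, norm_smul]
          have hI : ‖I‖ = 1 := by simp
          rw [hI, one_mul, one_mul]
          linarith [htop, e1, e2]
  have hb : Tendsto (fun R : ℝ => 2 * K * Real.exp (-(δ * R)) + (K / R + K / R))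
      atTop (nhds 0) := by
    have h1 : Tendsto (fun R : ℝ => Real.exp (-(δ * R))) atTop (nhds 0) := by
      apply Real.tendsto_exp_atBot.comp
      exact (tendsto_neg_atBot_iff.mpr (tendsto_id.const_mul_atTop hδ0))
    have h2 : Tendsto (fun R : ℝ => K / R) atTop (nhds 0) :=
      Tendsto.div_atTop tendsto_const_nhds tendsto_id
    have := ((h1.const_mul (2 * K)).add (h2.add h2))
    simpa using this
  apply squeeze_zero_norm' _ hb
  filter_upwards [eventually_ge_atTop 1] with R hR using main R hR

private lemma pairing_eq (H : ℂ → ℂ) (hHc : Continuous H) (g : ℝ → ℝ) (hgc : Continuous g)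
    (hgs : HasCompactSupport g) (R : ℝ) (hR : 0 ≤ R) :
    ∫ t : ℝ, g t • (∫ x in -R..R, Complex.exp (↑t * ↑x * I) * H ↑x)
      = ∫ x in -R..R, (∫ t : ℝ, (g t : ℂ) * Complex.exp (↑t * ↑x * I)) * H ↑x := by
  have hle : -R ≤ R := by linarith
  have hexpc : Continuous fun p : ℝ × ℝ => Complex.exp (↑p.1 * ↑p.2 * I) :=
    Complex.continuous_exp.comp (((Complex.continuous_ofReal.comp continuous_fst).mul
      (Complex.continuous_ofReal.comp continuous_snd)).mul continuous_const)
  have hcont : Continuous (fun p : ℝ × ℝ => g p.1 • (Complex.exp (↑p.1 * ↑p.2 * I) * H ↑p.2)) :=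
    (hgc.comp continuous_fst).smul
      (hexpc.mul (hHc.comp (Complex.continuous_ofReal.comp continuous_snd)))
  have hint : Integrable (fun p : ℝ × ℝ => g p.1 • (Complex.exp (↑p.1 * ↑p.2 * I) * H ↑p.2))
      (volume.prod (volume.restrict (Set.Ioc (-R) R))) := by
    refine Integrable.mono' (g := fun p : ℝ × ℝ => |g p.1| * ‖H ↑p.2‖) ?_
      hcont.aestronglyMeasurable ?_
    · exact Integrable.mul_prod
        (hgc.abs.integrable_of_hasCompactSupport
          (hgs.comp_left (g := fun r : ℝ => |r|) abs_zero))
        ((hHc.comp Complex.continuous_ofReal).norm.integrableOn_Ioc)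
    · refine Eventually.of_forall fun p => ?_
      rw [norm_smul, norm_mul]
      have h1 : ‖Complex.exp (↑p.1 * ↑p.2 * I)‖ = 1 := by
        rw [Complex.norm_exp]
        have : ((p.1 : ℂ) * ↑p.2 * I).re = 0 := by
          simp [Complex.mul_re, Complex.mul_im]
        rw [this, Real.exp_zero]
      rw [h1, one_mul, Real.norm_eq_abs]
  simp_rw [intervalIntegral.integral_of_le hle]
  have lhs_eq : ∫ t : ℝ, g t • (∫ x in Set.Ioc (-R) R, Complex.exp (↑t * ↑x * I) * H ↑x)
      = ∫ t : ℝ, ∫ x in Set.Ioc (-R) R, g t • (Complex.exp (↑t * ↑x * I) * H ↑x) := by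
    congr 1
    funext t
    exact (integral_smul (g t) _).symm
  rw [lhs_eq, MeasureTheory.integral_integral_swap hint]
  congr 1
  funext x
  simp_rw [Complex.real_smul, ← mul_assoc]
  rw [MeasureTheory.integral_mul_const]

private lemma mellin_trunc_eq (c : ℝ) (f : ℝ → ℂ) (H : ℂ → ℂ) (hHc : Continuous H)
    (hHf : ∀ x : ℝ, H ↑x = ↑(Real.exp (c * x)) * f (Real.exp x))
    {ρ : ℝ} (hρ : 1 < ρ) (t : ℝ) :
    (∫ u in Set.Ioc ρ⁻¹ ρ, (u : ℂ) ^ ((c : ℂ) + ↑t * I - 1) * f u)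
      = ∫ x in -(Real.log ρ)..(Real.log ρ), Complex.exp (↑t * ↑x * I) * H ↑x := by
  have hρ0 : 0 < ρ := lt_trans one_pos hρ
  have hle : ρ⁻¹ ≤ ρ := by
    have h1 : ρ⁻¹ * ρ = 1 := inv_mul_cancel₀ hρ0.ne'
    nlinarith [inv_pos.mpr hρ0]
  have hf_eq : ∀ u : ℝ, 0 < u →
      f u = (↑(Real.exp (c * Real.log u)) : ℂ)⁻¹ * H ↑(Real.log u) := by
    intro u hu
    have h := hHf (Real.log u)
    rw [Real.exp_log hu] at h
    rw [h, ← mul_assoc, inv_mul_cancel₀ (by exact_mod_cast Real.exp_ne_zero _), one_mul]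
  have hfc : ContinuousOn (fun u : ℝ => (u : ℂ) ^ ((c : ℂ) + ↑t * I - 1) * f u) (Set.Ioi 0) := by
    intro u hu
    have hu0 : (0 : ℝ) < u := hu
    apply ContinuousAt.continuousWithinAt
    apply ContinuousAt.mul
    · exact continuousAt_ofReal_cpow_const u _ (Or.inr hu0.ne')
    · have hmodel : ContinuousAt
          (fun v : ℝ => (↑(Real.exp (c * Real.log v)) : ℂ)⁻¹ * H ↑(Real.log v)) u := by
        have hlog : ContinuousAt Real.log u := Real.continuousAt_log hu0.ne'
        apply ContinuousAt.mul
        · apply ContinuousAt.inv₀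
          · exact Complex.continuous_ofReal.continuousAt.comp
              (Real.continuous_exp.continuousAt.comp ((continuousAt_const).mul hlog))
          · exact_mod_cast Real.exp_ne_zero _
        · exact hHc.continuousAt.comp (Complex.continuous_ofReal.continuousAt.comp hlog)
      apply hmodel.congr
      filter_upwards [IsOpen.mem_nhds isOpen_Ioi hu] with v hv
      exact (hf_eq v hv).symm
  rw [← intervalIntegral.integral_of_le hle]
  have himg : Real.exp '' (Set.uIcc (-(Real.log ρ)) (Real.log ρ)) ⊆ Set.Ioi 0 := by
    rintro _ ⟨x, -, rfl⟩
    exact Real.exp_pos x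
  have hsub := intervalIntegral.integral_comp_smul_deriv'
    (f := Real.exp) (f' := Real.exp) (g := fun u : ℝ => (u : ℂ) ^ ((c : ℂ) + ↑t * I - 1) * f u)
    (a := -(Real.log ρ)) (b := Real.log ρ)
    (fun x _ => Real.hasDerivAt_exp x) Real.continuous_exp.continuousOn
    (hfc.mono himg)
  rw [Real.exp_neg, Real.exp_log hρ0] at hsub
  rw [← hsub]
  apply intervalIntegral.integral_congr
  intro x _
  show Real.exp x • ((↑(Real.exp x) : ℂ) ^ ((c : ℂ) + ↑t * I - 1) * f (Real.exp x))
      = Complex.exp (↑t * ↑x * I) * H ↑x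
  have hfx : f (Real.exp x) = (↑(Real.exp (c * x)) : ℂ)⁻¹ * H ↑x := by
    have h := hHf x
    rw [h, ← mul_assoc, inv_mul_cancel₀ (by exact_mod_cast Real.exp_ne_zero _), one_mul]
  have hcpow : (↑(Real.exp x) : ℂ) ^ ((c : ℂ) + ↑t * I - 1)
      = Complex.exp (↑x * ((c : ℂ) + ↑t * I - 1)) := by
    rw [Complex.ofReal_exp, Complex.cpow_def_of_ne_zero (Complex.exp_ne_zero _),
      Complex.log_exp (by simp [Real.pi_pos]) (by simp [Real.pi_nonneg])]
  have hABCD : Complex.exp (x : ℂ) * Complex.exp (↑x * ((c : ℂ) + ↑t * I - 1))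
      = Complex.exp (↑(c * x) : ℂ) * Complex.exp (↑t * ↑x * I) := by
    rw [← Complex.exp_add, ← Complex.exp_add]
    congr 1
    push_cast
    ring
  rw [hfx, hcpow, Complex.real_smul, Complex.ofReal_exp]
  calc Complex.exp (x : ℂ) * (Complex.exp (↑x * ((c : ℂ) + ↑t * I - 1)) *
        ((↑(Real.exp (c * x)) : ℂ)⁻¹ * H ↑x))
      = (Complex.exp (x : ℂ) * Complex.exp (↑x * ((c : ℂ) + ↑t * I - 1))) *
        (↑(Real.exp (c * x)) : ℂ)⁻¹ * H ↑x := by ring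
    _ = (Complex.exp (↑(c * x) : ℂ) * Complex.exp (↑t * ↑x * I)) *
        (↑(Real.exp (c * x)) : ℂ)⁻¹ * H ↑x := by rw [hABCD]
    _ = Complex.exp (↑t * ↑x * I) * H ↑x := by
        rw [Complex.ofReal_exp]
        field_simp [Complex.exp_ne_zero]

/-- **Paley–Wiener theorem for the Mellin transform (`B̃²_{c,T} ⊆ B²_{c,T}`).**
If `f ∈ X²_c` and `h(x) = e^{cx} f(e^x)` extends to an entire function of exponential
type `T`, then `M²[f](c+it) = 0` for a.e. `|t| > T`. -/
theorem mellin_paley_wiener (c T : ℝ) (hT : 0 < T) (f : ℝ → ℂ) (hf : MemXc2 c f)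
    (H : ℂ → ℂ) (hH : Differentiable ℂ H)
    (hHf : ∀ x : ℝ, H (x : ℂ) = (Real.exp (c * x) : ℂ) * f (Real.exp x))
    (htype : ∃ C > 0, ∀ z : ℂ, ‖H z‖ ≤ C * Real.exp (T * |z.im|)) :
    ∀ G : ℝ → ℂ, Measurable G → MellinTransL2 c f G →
      ∀ᵐ t : ℝ, T < |t| → G t = 0 := by
  intro G hGm hGL2
  obtain ⟨C, hC0, hCb⟩ := htype
  have hHc : Continuous H := hH.continuous
  set F : ℝ → ℝ → ℂ := fun R t => ∫ x in -R..R, Complex.exp (↑t * ↑x * I) * H ↑x with hFdef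
  have hFcont : ∀ R : ℝ, Continuous (F R) := by
    intro R
    apply intervalIntegral.continuous_parametric_intervalIntegral_of_continuous' (μ := volume)
      (f := fun (t : ℝ) (x : ℝ) => Complex.exp (↑t * ↑x * I) * H ↑x)
    exact (Complex.continuous_exp.comp (((Complex.continuous_ofReal.comp continuous_fst).mul
      (Complex.continuous_ofReal.comp continuous_snd)).mul continuous_const)).mul
      (hHc.comp (Complex.continuous_ofReal.comp continuous_snd))
  -- reparametrize the L² convergence
  have hGt : Tendsto (fun ρ : ℝ =>
      eLpNorm (fun t : ℝ =>
        (∫ u in Set.Ioc ρ⁻¹ ρ, (u : ℂ) ^ ((c : ℂ) + t * Complex.I - 1) * f u) - G t)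
        2 volume) atTop (nhds 0) := hGL2
  have hFG : Tendsto (fun R : ℝ => eLpNorm (fun t => F R t - G t) 2 volume)
      atTop (nhds 0) := by
    have h1 := hGt.comp Real.tendsto_exp_atTop
    apply h1.congr'
    filter_upwards [eventually_gt_atTop 0] with R hR
    have hρ : 1 < Real.exp R := Real.one_lt_exp_iff.mpr hR
    simp only [Function.comp_apply]
    congr 1
    funext t
    rw [mellin_trunc_eq c f H hHc hHf hρ t, Real.log_exp]
  -- local integrability of G
  obtain ⟨R₀, hR₀⟩ := (hFG.eventually_lt_const (by norm_num : (0:ℝ≥0∞) < 1)).exists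
  have hmem₀ : MemLp (fun t => F R₀ t - G t) 2 volume :=
    ⟨((hFcont R₀).aestronglyMeasurable).sub hGm.aestronglyMeasurable, hR₀.trans_le le_top⟩
  have hGloc : LocallyIntegrable G volume := by
    have h2 := hmem₀.locallyIntegrable (by norm_num : (1:ℝ≥0∞) ≤ 2)
    have h3 : G = fun t => F R₀ t - (F R₀ t - G t) := by funext t; ring
    rw [h3]
    exact ((hFcont R₀).locallyIntegrable).sub h2
  have hone : (1 : ℝ≥0∞) / 1 = 1 / 2 + 1 / 2 := by
    rw [ENNReal.add_halves, one_div_one]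
  -- pairing limit
  have pair_lim : ∀ g : ℝ → ℝ, Continuous g → HasCompactSupport g →
      Tendsto (fun R => ∫ t, g t • F R t) atTop (nhds (∫ t, g t • G t)) := by
    intro g hgc hgs
    have hgL2 : MemLp g 2 volume := hgc.memLp_of_hasCompactSupport hgs
    have hgFint : ∀ R : ℝ, Integrable (fun t => g t • F R t) volume := fun R =>
      ((hgc.smul (hFcont R)).integrable_of_hasCompactSupport hgs.smul_right)
    have hgG : Integrable (fun t => g t • G t) volume := by
      have h1 : Integrable (fun t => g t • (F R₀ t - G t)) volume :=
        memLp_one_iff_integrable.mp (hmem₀.smul hgL2)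
      have h2 : (fun t => g t • G t) = fun t => g t • F R₀ t - g t • (F R₀ t - G t) := by
        funext t
        rw [smul_sub]
        ring
      rw [h2]
      exact (hgFint R₀).sub h1
    have key : Tendsto (fun R => (∫ t, g t • F R t) - ∫ t, g t • G t) atTop (nhds 0) := by
      apply squeeze_zero_norm' (a := fun R =>
        (eLpNorm g 2 volume).toReal * (eLpNorm (fun t => F R t - G t) 2 volume).toReal)
      · filter_upwards [hFG.eventually_lt_const (by norm_num : (0:ℝ≥0∞) < 1)] with R hRfin
        have hmemR : MemLp (fun t => F R t - G t) 2 volume :=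
          ⟨((hFcont R).aestronglyMeasurable).sub hGm.aestronglyMeasurable, hRfin.trans_le le_top⟩
        have hsmul : Integrable (fun t => g t • (F R t - G t)) volume :=
          memLp_one_iff_integrable.mp (hmemR.smul hgL2)
        have heq : (∫ t, g t • F R t) - ∫ t, g t • G t = ∫ t, g t • (F R t - G t) := by
          rw [← integral_sub (hgFint R) hgG]
          congr 1
          funext t
          rw [smul_sub]
        rw [heq]
        have hh1 : ‖∫ t, g t • (F R t - G t)‖ ≤
            (eLpNorm (fun t => g t • (F R t - G t)) 1 volume).toReal := by
          rw [eLpNorm_one_eq_lintegral_enorm]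
          have h := norm_integral_le_lintegral_norm (fun t => g t • (F R t - G t)) (μ := volume)
          refine h.trans (le_of_eq ?_)
          congr 1
          apply lintegral_congr
          intro t
          rw [ofReal_norm]
        apply hh1.trans
        have hh2 : eLpNorm (fun t => g t • (F R t - G t)) 1 volume ≤
            eLpNorm g 2 volume * eLpNorm (fun t => F R t - G t) 2 volume :=
          eLpNorm_smul_le_mul_eLpNorm (p := 2) (q := 2) (r := 1) (f := fun t => F R t - G t) (φ := g) hmemR.1 hgL2.1
        have hfin : eLpNorm g 2 volume * eLpNorm (fun t => F R t - G t) 2 volume ≠ ⊤ :=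
          ENNReal.mul_ne_top hgL2.2.ne hmemR.2.ne
        calc (eLpNorm (fun t => g t • (F R t - G t)) 1 volume).toReal
            ≤ (eLpNorm g 2 volume * eLpNorm (fun t => F R t - G t) 2 volume).toReal :=
              ENNReal.toReal_mono hfin hh2
          _ = (eLpNorm g 2 volume).toReal * (eLpNorm (fun t => F R t - G t) 2 volume).toReal :=
              ENNReal.toReal_mul
      · have h1 : Tendsto (fun R => (eLpNorm (fun t => F R t - G t) 2 volume).toReal)
            atTop (nhds 0) := by
          have := (ENNReal.tendsto_toReal (by norm_num : (0:ℝ≥0∞) ≠ ⊤)).comp hFG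
          simpa [Function.comp_def] using this
        have := h1.const_mul ((eLpNorm g 2 volume).toReal)
        simpa using this
    have := key.add_const (∫ t, g t • G t)
    simpa using this
  -- positive-side vanishing
  have pos_side : ∀ H' : ℂ → ℂ, Differentiable ℂ H' →
      (∀ z : ℂ, ‖H' z‖ ≤ C * Real.exp (T * |z.im|)) →
      ∀ g : ℝ → ℝ, ContDiff ℝ ∞ g → HasCompactSupport g → tsupport g ⊆ Set.Ioi T →
      Tendsto (fun R : ℝ => ∫ t, g t •
        (∫ x in -R..R, Complex.exp (↑t * ↑x * I) * H' ↑x)) atTop (nhds 0) := by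
    intro H' hH' hH'b g hg hgs hgsupp
    by_cases hne : (tsupport g).Nonempty
    · set a := sInf (tsupport g) with ha
      have hamem : a ∈ tsupport g := hgs.sInf_mem hne
      have hTa : T < a := hgsupp hamem
      have hIci : tsupport g ⊆ Set.Ici a := fun t ht => csInf_le hgs.bddBelow ht
      set ψ : ℂ → ℂ := fun z => ∫ t : ℝ, (g t : ℂ) * Complex.exp (↑t * z * I) with hψdef
      have hψd : Differentiable ℂ ψ := psi_differentiable g hg.continuous hgs
      have hB : 0 ≤ ∫ t : ℝ, |deriv (deriv g) t| := integral_nonneg fun t => abs_nonneg _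
      have hcv := contour_vanish C (∫ t : ℝ, |deriv (deriv g) t|) T a hC0.le hB hTa
        H' ψ hH' hψd hH'b (fun z h0 him => psi_bound g hg hgs hIci h0 him)
      apply hcv.congr'
      filter_upwards [eventually_ge_atTop 0] with R hR
      exact (pairing_eq H' hH'.continuous g hg.continuous hgs R hR).symm
    · have hg0 : g = 0 := by
        funext t
        by_contra ht
        exact hne ⟨t, subset_tsupport g ht⟩
      simp [hg0]
  -- conclusion on (T, ∞)
  have hpos : ∀ᵐ t : ℝ, t ∈ Set.Ioi T → G t = 0 := by
    refine isOpen_Ioi.ae_eq_zero_of_integral_contDiff_smul_eq_zero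
      (hGloc.locallyIntegrableOn _) ?_
    intro g hgsm hgs hgsupp
    exact tendsto_nhds_unique (pair_lim g hgsm.continuous hgs)
      (pos_side H hH hCb g hgsm hgs hgsupp)
  -- conclusion on (-∞, -T)
  have hneg : ∀ᵐ t : ℝ, t ∈ Set.Iio (-T) → G t = 0 := by
    refine isOpen_Iio.ae_eq_zero_of_integral_contDiff_smul_eq_zero
      (hGloc.locallyIntegrableOn _) ?_
    intro g hgsm hgs hgsupp
    set g' : ℝ → ℝ := fun t => g (-t) with hg'def
    have hg'sm : ContDiff ℝ ∞ g' := hgsm.comp (contDiff_id.neg)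
    have hg's : HasCompactSupport g' := hgs.comp_homeomorph (Homeomorph.neg ℝ)
    have hg'supp : tsupport g' ⊆ Set.Ioi T := by
      intro t ht
      have h1 : tsupport g' = (fun t : ℝ => -t) ⁻¹' tsupport g := by
        rw [tsupport, tsupport]
        rw [show Function.support g' = (fun t : ℝ => -t) ⁻¹' Function.support g from rfl]
        exact ((Homeomorph.neg ℝ).preimage_closure _).symm
      have h2 : -t ∈ tsupport g := by rw [h1] at ht; exact ht
      have h3 := hgsupp h2
      simp only [Set.mem_Iio] at h3
      simp only [Set.mem_Ioi]
      linarith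
    have hH' : Differentiable ℂ (fun z : ℂ => H (-z)) := hH.comp differentiable_neg
    have hH'b : ∀ z : ℂ, ‖H (-z)‖ ≤ C * Real.exp (T * |z.im|) := by
      intro z
      have := hCb (-z)
      simpa using this
    have h0 := pos_side (fun z => H (-z)) hH' hH'b g' hg'sm hg's hg'supp
    have heq : ∀ R : ℝ, (∫ t, g' t • (∫ x in -R..R, Complex.exp (↑t * ↑x * I) * H (-↑x)))
        = ∫ t, g t • F R t := by
      intro R
      have hinner : ∀ t : ℝ, (∫ x in -R..R, Complex.exp (↑t * ↑x * I) * H (-↑x))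
          = F R (-t) := by
        intro t
        have hcn := intervalIntegral.integral_comp_neg (a := -R) (b := R)
          (fun x : ℝ => Complex.exp (↑(-t) * ↑x * I) * H ↑x)
        rw [neg_neg] at hcn
        show _ = ∫ x in -R..R, Complex.exp (↑(-t) * ↑x * I) * H ↑x
        have e3 : (fun x : ℝ => Complex.exp (↑t * ↑x * I) * H (-↑x))
            = fun x : ℝ => Complex.exp (↑(-t : ℝ) * ↑(-x : ℝ) * I) * H ↑(-x : ℝ) := by
          funext x
          rw [show ((-t : ℝ) : ℂ) * ((-x : ℝ) : ℂ) * I = (t : ℂ) * (x : ℂ) * I by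
              push_cast; ring,
            Complex.ofReal_neg x]
        calc (∫ x in -R..R, Complex.exp (↑t * ↑x * I) * H (-↑x))
            = ∫ x in -R..R, Complex.exp (↑(-t : ℝ) * ↑(-x : ℝ) * I) * H ↑(-x : ℝ) := by
              rw [e3]
          _ = ∫ x in -R..R, Complex.exp (↑(-t : ℝ) * ↑x * I) * H ↑x := hcn
      calc (∫ t, g' t • (∫ x in -R..R, Complex.exp (↑t * ↑x * I) * H (-↑x)))
          = ∫ t, g (-t) • F R (-t) := by
            congr 1
            funext t
            rw [hinner t]
        _ = ∫ t, g t • F R t := integral_neg_eq_self (fun s : ℝ => g s • F R s) volume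
    have h0' : Tendsto (fun R : ℝ => ∫ t, g t • F R t) atTop (nhds 0) := by
      apply h0.congr
      intro R
      exact heq R
    exact tendsto_nhds_unique (pair_lim g hgsm.continuous hgs) h0'
  filter_upwards [hpos, hneg] with t h1 h2 habs
  rcases lt_abs.mp habs with h | h
  · exact h1 h
  · exact h2 (by linarith : t < -T)
end
end
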